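/- arXiv:2605.19667 — 9 statements merged into one kernel-verified Lean document; each statement's English description precedes it below -/
import Mathlib

section
/- Under the standing hypotheses, the constant c_s defined as the infimum of s' over the compact interval [z_β − (L_max − L_min)/τ, z_β + (L_max − L_min)/τ] is strictly positive, hence κ = c_s/τ > 0; and for every pair of Borel probability measures μ, ν on ℝ^d and every q lying between the soft β-quantiles q_ν and q_μ, one has (F_ν(q) − F_ν(q_ν))·(q − q_ν) ≥ κ·|q − q_ν|². -/
open MeasureTheory Filter Topology

/-- MVT-based quadratic lower bound on an interval where `deriv s ≥ cs`. -/
private lemma mvt_quad {s : ℝ → ℝ} (hs_diff : ContDiff ℝ 1 s)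
    {l u cs : ℝ} (hcs : ∀ z ∈ Set.Icc l u, cs ≤ deriv s z)
    {a b : ℝ} (ha : a ∈ Set.Icc l u) (hb : b ∈ Set.Icc l u) :
    cs * (a - b) ^ 2 ≤ (s a - s b) * (a - b) := by
  have hdiff : Differentiable ℝ s := hs_diff.differentiable one_ne_zero
  rcases lt_trichotomy a b with h | h | h
  · obtain ⟨c, hc, hder⟩ := exists_deriv_eq_slope s h hs_diff.continuous.continuousOn
      (fun x _ => (hdiff x).differentiableWithinAt)
    have hcI : c ∈ Set.Icc l u := ⟨ha.1.trans hc.1.le, hc.2.le.trans hb.2⟩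
    have hba : (0:ℝ) < b - a := by linarith
    have h1 : s b - s a = deriv s c * (b - a) := by
      field_simp at hder; linarith
    nlinarith [hcs c hcI, sq_nonneg (a - b)]
  · simp [h]
  · obtain ⟨c, hc, hder⟩ := exists_deriv_eq_slope s h hs_diff.continuous.continuousOn
      (fun x _ => (hdiff x).differentiableWithinAt)
    have hcI : c ∈ Set.Icc l u := ⟨hb.1.trans hc.1.le, hc.2.le.trans ha.2⟩
    have hba : (0:ℝ) < a - b := by linarith
    have h1 : s a - s b = deriv s c * (a - b) := by
      field_simp at hder; linarith
    nlinarith [hcs c hcI, sq_nonneg (a - b)]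

private lemma integrable_s {d : ℕ} {s : ℝ → ℝ} (hs_cont : Continuous s)
    (hs_pos : ∀ z, 0 < s z) (hs_lt1 : ∀ z, s z < 1)
    (τ : ℝ) {L : EuclideanSpace ℝ (Fin d) → ℝ} (hL : Measurable L)
    (c : ℝ) (ν : Measure (EuclideanSpace ℝ (Fin d))) [IsProbabilityMeasure ν] :
    Integrable (fun x => s ((c - L x) / τ)) ν := by
  have hmeas : Measurable (fun x => s ((c - L x) / τ)) :=
    hs_cont.measurable.comp ((measurable_const.sub hL).div_const τ)
  refine (integrable_const (1:ℝ)).mono' hmeas.aestronglyMeasurable ?_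
  filter_upwards with x
  rw [Real.norm_eq_abs, abs_of_pos (hs_pos _)]
  exact (hs_lt1 _).le

/-- Soft quantiles lie in `[τ zβ + Lmin, τ zβ + Lmax]`. -/
private lemma quantile_bds {d : ℕ} {s : ℝ → ℝ} (hs_cont : Continuous s)
    (hs_mono : StrictMono s) (hs_pos : ∀ z, 0 < s z) (hs_lt1 : ∀ z, s z < 1)
    {τ : ℝ} (hτ : 0 < τ) {L : EuclideanSpace ℝ (Fin d) → ℝ} (hL : Measurable L)
    {Lmin Lmax : ℝ} (hLbd : ∀ x, Lmin ≤ L x ∧ L x ≤ Lmax)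
    {zβ β qν : ℝ} (hzβ : s zβ = β)
    (ν : Measure (EuclideanSpace ℝ (Fin d))) [IsProbabilityMeasure ν]
    (hν : ∫ x, s ((qν - L x) / τ) ∂ν = β) :
    τ * zβ + Lmin ≤ qν ∧ qν ≤ τ * zβ + Lmax := by
  constructor
  · by_contra hlt
    push_neg at hlt
    have hub : ∀ x, s ((qν - L x) / τ) ≤ s ((qν - Lmin) / τ) := fun x =>
      (hs_mono.le_iff_le).2 (div_le_div_of_nonneg_right (by linarith [(hLbd x).1]) hτ.le)
    have hint : ∫ x, s ((qν - L x) / τ) ∂ν ≤ s ((qν - Lmin) / τ) := by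
      calc ∫ x, s ((qν - L x) / τ) ∂ν ≤ ∫ _, s ((qν - Lmin) / τ) ∂ν :=
            integral_mono (integrable_s hs_cont hs_pos hs_lt1 τ hL qν ν)
              (integrable_const _) hub
        _ = s ((qν - Lmin) / τ) := by simp
    have hstrict : s ((qν - Lmin) / τ) < β := by
      rw [← hzβ]
      exact hs_mono (by rw [div_lt_iff₀ hτ]; linarith)
    linarith [hν ▸ hint]
  · by_contra hlt
    push_neg at hlt
    have hub : ∀ x, s ((qν - Lmax) / τ) ≤ s ((qν - L x) / τ) := fun x =>
      (hs_mono.le_iff_le).2 (div_le_div_of_nonneg_right (by linarith [(hLbd x).2]) hτ.le)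
    have hint : s ((qν - Lmax) / τ) ≤ ∫ x, s ((qν - L x) / τ) ∂ν := by
      calc s ((qν - Lmax) / τ) = ∫ _, s ((qν - Lmax) / τ) ∂ν := by simp
        _ ≤ ∫ x, s ((qν - L x) / τ) ∂ν :=
            integral_mono (integrable_const _)
              (integrable_s hs_cont hs_pos hs_lt1 τ hL qν ν) hub
    have hstrict : β < s ((qν - Lmax) / τ) := by
      rw [← hzβ]
      exact hs_mono (by rw [lt_div_iff₀ hτ]; linarith)
    linarith [hν ▸ hint]

/-- Uniform local strong monotonicity of the soft quantile map:
`c_s > 0`, `κ = c_s/τ > 0`, and `(F_ν(q) - F_ν(q_ν)) (q - q_ν) ≥ κ |q - q_ν|²`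
for every `q` between the soft quantiles `q_ν` and `q_μ`. -/
theorem soft_quantile_strong_monotonicity
    (d : ℕ) (s : ℝ → ℝ)
    (hs_diff : ContDiff ℝ 1 s) (hs_mono : StrictMono s)
    (hs_pos : ∀ z, 0 < s z) (hs_lt1 : ∀ z, s z < 1)
    (hs_deriv_pos : ∀ z, 0 < deriv s z)
    (hs_bot : Tendsto s atBot (𝓝 0)) (hs_top : Tendsto s atTop (𝓝 1))
    (β τ : ℝ) (hβ : 0 < β ∧ β < 1) (hτ : 0 < τ)
    (L : EuclideanSpace ℝ (Fin d) → ℝ) (hL : Measurable L)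
    (Lmin Lmax : ℝ) (hLbd : ∀ x, Lmin ≤ L x ∧ L x ≤ Lmax)
    (zβ : ℝ) (hzβ : s zβ = β)
    (cs κ : ℝ)
    (hcs : cs = sInf (deriv s ''
      Set.Icc (zβ - (Lmax - Lmin) / τ) (zβ + (Lmax - Lmin) / τ)))
    (hκ : κ = cs / τ) :
    0 < cs ∧ 0 < κ ∧
      ∀ (μ ν : Measure (EuclideanSpace ℝ (Fin d))),
        IsProbabilityMeasure μ → IsProbabilityMeasure ν →
        ∀ qμ qν q : ℝ,
          (∫ x, s ((qμ - L x) / τ) ∂μ = β) →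
          (∫ x, s ((qν - L x) / τ) ∂ν = β) →
          q ∈ Set.uIcc qν qμ →
          ((∫ x, s ((q - L x) / τ) ∂ν - β) - (∫ x, s ((qν - L x) / τ) ∂ν - β))
              * (q - qν)
            ≥ κ * |q - qν| ^ 2 := by
  have hM : 0 ≤ Lmax - Lmin := by
    have := hLbd 0
    linarith [this.1, this.2]
  have hIle : zβ - (Lmax - Lmin) / τ ≤ zβ + (Lmax - Lmin) / τ := by
    have : 0 ≤ (Lmax - Lmin) / τ := div_nonneg hM hτ.le
    linarith
  set l := zβ - (Lmax - Lmin) / τ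
  set u := zβ + (Lmax - Lmin) / τ
  have hderiv_cont : Continuous (deriv s) := hs_diff.continuous_deriv le_rfl
  have hKcompact : IsCompact (deriv s '' Set.Icc l u) :=
    (isCompact_Icc).image hderiv_cont
  have hKne : (deriv s '' Set.Icc l u).Nonempty :=
    (Set.nonempty_Icc.2 hIle).image _
  have hcs_mem : cs ∈ deriv s '' Set.Icc l u := hcs ▸ hKcompact.sInf_mem hKne
  obtain ⟨z0, _, hz0⟩ := hcs_mem
  have hcs_pos : 0 < cs := hz0 ▸ hs_deriv_pos z0
  have hκ_pos : 0 < κ := hκ ▸ div_pos hcs_pos hτ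
  refine ⟨hcs_pos, hκ_pos, ?_⟩
  intro μ ν hμP hνP qμ qν q hμβ hνβ hq
  have hcs_le : ∀ z ∈ Set.Icc l u, cs ≤ deriv s z := fun z hz =>
    hcs ▸ csInf_le hKcompact.bddBelow (Set.mem_image_of_mem _ hz)
  have hs_cont := hs_diff.continuous
  -- bounds on qν, qμ, q
  have hbν := quantile_bds hs_cont hs_mono hs_pos hs_lt1 hτ hL hLbd hzβ ν hνβ
  have hbμ := quantile_bds hs_cont hs_mono hs_pos hs_lt1 hτ hL hLbd hzβ μ hμβ
  have hqmem : q ∈ Set.Icc (τ * zβ + Lmin) (τ * zβ + Lmax) := by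
    have : Set.uIcc qν qμ ⊆ Set.Icc (τ * zβ + Lmin) (τ * zβ + Lmax) :=
      Set.uIcc_subset_Icc ⟨hbν.1, hbν.2⟩ ⟨hbμ.1, hbμ.2⟩
    exact this hq
  -- membership of arguments in [l,u]
  have hmem : ∀ (r : ℝ), r ∈ Set.Icc (τ * zβ + Lmin) (τ * zβ + Lmax) →
      ∀ x, (r - L x) / τ ∈ Set.Icc l u := by
    intro r hr x
    have h1 := (hLbd x).1
    have h2 := (hLbd x).2
    constructor
    · rw [le_div_iff₀ hτ]
      have : (zβ - (Lmax - Lmin) / τ) * τ = zβ * τ - (Lmax - Lmin) := by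
        field_simp
      rw [this]
      have := hr.1
      nlinarith
    · rw [div_le_iff₀ hτ]
      have : (zβ + (Lmax - Lmin) / τ) * τ = zβ * τ + (Lmax - Lmin) := by
        field_simp
      rw [this]
      have := hr.2
      nlinarith
  have hqνmem : qν ∈ Set.Icc (τ * zβ + Lmin) (τ * zβ + Lmax) := ⟨hbν.1, hbν.2⟩
  -- pointwise bound
  have hpoint : ∀ x, κ * (q - qν) ^ 2 ≤
      (s ((q - L x) / τ) - s ((qν - L x) / τ)) * (q - qν) := by
    intro x
    have ha := hmem q hqmem x
    have hb := hmem qν hqνmem x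
    have hquad := mvt_quad hs_diff hcs_le ha hb
    have hab : (q - L x) / τ - (qν - L x) / τ = (q - qν) / τ := by ring
    rw [hab] at hquad
    have hdiv : ((q - qν) / τ) ^ 2 = (q - qν) ^ 2 / τ ^ 2 := by ring
    rw [hdiv] at hquad
    have hτ2 : (0:ℝ) < τ ^ 2 := by positivity
    -- hquad : cs * ((q-qν)^2 / τ^2) ≤ (s a - s b) * ((q-qν)/τ)
    have := mul_le_mul_of_nonneg_left hquad hτ.le
    calc κ * (q - qν) ^ 2 = τ * (cs * ((q - qν) ^ 2 / τ ^ 2)) := by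
          rw [hκ]; field_simp
      _ ≤ τ * ((s ((q - L x) / τ) - s ((qν - L x) / τ)) * ((q - qν) / τ)) := this
      _ = (s ((q - L x) / τ) - s ((qν - L x) / τ)) * (q - qν) := by
          field_simp
  -- integrate
  have hint_q := integrable_s hs_cont hs_pos hs_lt1 τ hL q ν
  have hint_qν := integrable_s hs_cont hs_pos hs_lt1 τ hL qν ν
  have hsub : (∫ x, s ((q - L x) / τ) ∂ν) - (∫ x, s ((qν - L x) / τ) ∂ν)
      = ∫ x, (s ((q - L x) / τ) - s ((qν - L x) / τ)) ∂ν :=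
    (integral_sub hint_q hint_qν).symm
  have key : κ * (q - qν) ^ 2 ≤
      (∫ x, (s ((q - L x) / τ) - s ((qν - L x) / τ)) ∂ν) * (q - qν) := by
    rw [← integral_mul_const]
    calc κ * (q - qν) ^ 2 = ∫ _, κ * (q - qν) ^ 2 ∂ν := by simp
      _ ≤ ∫ x, (s ((q - L x) / τ) - s ((qν - L x) / τ)) * (q - qν) ∂ν :=
          integral_mono (integrable_const _)
            ((hint_q.sub hint_qν).mul_const _) hpoint
  rw [ge_iff_le, sq_abs]
  calc κ * (q - qν) ^ 2
      ≤ (∫ x, (s ((q - L x) / τ) - s ((qν - L x) / τ)) ∂ν) * (q - qν) := key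
    _ = ((∫ x, s ((q - L x) / τ) ∂ν) - (∫ x, s ((qν - L x) / τ) ∂ν))
          * (q - qν) := by rw [hsub]
    _ = ((∫ x, s ((q - L x) / τ) ∂ν - β) - (∫ x, s ((qν - L x) / τ) ∂ν - β))
          * (q - qν) := by ring
end

section
/- Under the standing hypotheses, for every pair of Borel probability measures μ, ν on ℝ^d, the soft β-quantiles satisfy |q_μ − q_ν| ≤ κ⁻¹ · |F_μ(q_ν) − F_ν(q_ν)|. -/
open MeasureTheory Filter Topology

/-- Pointwise quantitative increase of `s` on an interval where
`deriv s` is bounded below by its infimum `cs`. -/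
lemma soft_incr_aux (s : ℝ → ℝ) (hs_diff : ContDiff ℝ 1 s)
    (hs_deriv_pos : ∀ z, 0 < deriv s z) (lo hi cs : ℝ)
    (hcs : cs = sInf (deriv s '' Set.Icc lo hi))
    {a b : ℝ} (ha : a ∈ Set.Icc lo hi) (hb : b ∈ Set.Icc lo hi)
    (hba : b ≤ a) : cs * (a - b) ≤ s a - s b := by
  rcases eq_or_lt_of_le hba with h | h
  · simp [h]
  · have hdiff : ∀ z : ℝ, DifferentiableAt ℝ s z := fun z =>
      (hs_diff.differentiable one_ne_zero).differentiableAt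
    obtain ⟨c, hc, hderiv⟩ := exists_deriv_eq_slope s h
      (hs_diff.continuous.continuousOn) (fun x _ => (hdiff x).differentiableWithinAt)
    have hcI : c ∈ Set.Icc lo hi :=
      ⟨le_trans hb.1 hc.1.le, le_trans hc.2.le ha.2⟩
    have hbdd : BddBelow (deriv s '' Set.Icc lo hi) := by
      refine ⟨0, ?_⟩
      rintro y ⟨z, _, rfl⟩
      exact (hs_deriv_pos z).le
    have hcs_le : cs ≤ deriv s c := by
      rw [hcs]
      exact csInf_le hbdd ⟨c, hcI, rfl⟩
    have hslope : deriv s c = (s a - s b) / (a - b) := hderiv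
    have hab : 0 < a - b := sub_pos.mpr h
    have : cs ≤ (s a - s b) / (a - b) := hslope ▸ hcs_le
    calc cs * (a - b) ≤ ((s a - s b) / (a - b)) * (a - b) := by
          exact mul_le_mul_of_nonneg_right this hab.le
      _ = s a - s b := by field_simp

/-- Quantile inverse stability:
`|q_μ - q_ν| ≤ κ⁻¹ |F_μ(q_ν) - F_ν(q_ν)|`. -/
theorem quantile_inverse_stability
    (d : ℕ) (s : ℝ → ℝ)
    (hs_diff : ContDiff ℝ 1 s) (hs_mono : StrictMono s)
    (hs_pos : ∀ z, 0 < s z) (hs_lt1 : ∀ z, s z < 1)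
    (hs_deriv_pos : ∀ z, 0 < deriv s z)
    (hs_bot : Tendsto s atBot (𝓝 0)) (hs_top : Tendsto s atTop (𝓝 1))
    (β τ : ℝ) (hβ : 0 < β ∧ β < 1) (hτ : 0 < τ)
    (L : EuclideanSpace ℝ (Fin d) → ℝ) (hL : Measurable L)
    (Lmin Lmax : ℝ) (hLbd : ∀ x, Lmin ≤ L x ∧ L x ≤ Lmax)
    (zβ : ℝ) (hzβ : s zβ = β)
    (cs κ : ℝ)
    (hcs : cs = sInf (deriv s ''
      Set.Icc (zβ - (Lmax - Lmin) / τ) (zβ + (Lmax - Lmin) / τ)))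
    (hκ : κ = cs / τ) (hκpos : 0 < κ)
    (μ ν : Measure (EuclideanSpace ℝ (Fin d)))
    [IsProbabilityMeasure μ] [IsProbabilityMeasure ν]
    (qμ qν : ℝ)
    (hqμ : ∫ x, s ((qμ - L x) / τ) ∂μ = β)
    (hqν : ∫ x, s ((qν - L x) / τ) ∂ν = β) :
    |qμ - qν| ≤ κ⁻¹ *
      |(∫ x, s ((qν - L x) / τ) ∂μ - β) - (∫ x, s ((qν - L x) / τ) ∂ν - β)| := by
  obtain ⟨hβ0, hβ1⟩ := hβ
  set lo := zβ - (Lmax - Lmin) / τ with hlo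
  set hi := zβ + (Lmax - Lmin) / τ with hhi
  -- integrability of the integrands
  have hmeas : ∀ q : ℝ, Measurable (fun x => s ((q - L x) / τ)) := fun q =>
    hs_diff.continuous.measurable.comp ((measurable_const.sub hL).div_const τ)
  have hint : ∀ (q : ℝ) (ρ : Measure (EuclideanSpace ℝ (Fin d)))
      [IsProbabilityMeasure ρ], Integrable (fun x => s ((q - L x) / τ)) ρ := by
    intro q ρ _
    refine (integrable_const (1 : ℝ)).mono' (hmeas q).aestronglyMeasurable ?_
    filter_upwards with x
    rw [Real.norm_eq_abs, abs_le]
    exact ⟨by linarith [hs_pos ((q - L x) / τ)], (hs_lt1 _).le⟩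
  -- location of the quantiles
  have key : ∀ (ρ : Measure (EuclideanSpace ℝ (Fin d)))
      [IsProbabilityMeasure ρ] (q : ℝ),
      (∫ x, s ((q - L x) / τ) ∂ρ = β) →
      τ * zβ + Lmin ≤ q ∧ q ≤ τ * zβ + Lmax := by
    intro ρ _ q hq
    constructor
    · have h1 : ∀ x, s ((q - L x) / τ) ≤ s ((q - Lmin) / τ) := fun x => by
        apply hs_mono.monotone
        have := (hLbd x).1
        apply div_le_div_of_nonneg_right ?_ hτ.le |>.trans_eq rfl
        linarith
      have h2 : (∫ x, s ((q - L x) / τ) ∂ρ) ≤ ∫ _x, s ((q - Lmin) / τ) ∂ρ :=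
        integral_mono (hint q ρ) (integrable_const _) h1
      rw [hq, integral_const, probReal_univ] at h2
      simp at h2
      have h3 : zβ ≤ (q - Lmin) / τ := by
        by_contra hcon
        push_neg at hcon
        exact absurd (hzβ ▸ h2) (not_le.mpr (hs_mono hcon))
      rw [le_div_iff₀ hτ] at h3
      nlinarith
    · have h1 : ∀ x, s ((q - Lmax) / τ) ≤ s ((q - L x) / τ) := fun x => by
        apply hs_mono.monotone
        have := (hLbd x).2
        apply div_le_div_of_nonneg_right ?_ hτ.le |>.trans_eq rfl
        linarith
      have h2 : (∫ _x, s ((q - Lmax) / τ) ∂ρ) ≤ ∫ x, s ((q - L x) / τ) ∂ρ :=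
        integral_mono (integrable_const _) (hint q ρ) h1
      rw [hq, integral_const, probReal_univ] at h2
      simp at h2
      have h3 : (q - Lmax) / τ ≤ zβ := by
        by_contra hcon
        push_neg at hcon
        exact absurd (hzβ ▸ h2) (not_le.mpr (hs_mono hcon))
      rw [div_le_iff₀ hτ] at h3
      nlinarith
  obtain ⟨hqμ1, hqμ2⟩ := key μ qμ hqμ
  obtain ⟨hqν1, hqν2⟩ := key ν qν hqν
  -- membership in the interval
  have hmem : ∀ (q : ℝ), τ * zβ + Lmin ≤ q → q ≤ τ * zβ + Lmax →
      ∀ x, (q - L x) / τ ∈ Set.Icc lo hi := by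
    intro q h1 h2 x
    obtain ⟨hx1, hx2⟩ := hLbd x
    constructor
    · rw [hlo, sub_le_iff_le_add, ← add_div, le_div_iff₀ hτ]
      nlinarith
    · rw [hhi, div_le_iff₀ hτ]
      have : (Lmax - Lmin) / τ * τ = Lmax - Lmin := by field_simp
      nlinarith [this]
  have hmemμ := hmem qμ hqμ1 hqμ2
  have hmemν := hmem qν hqν1 hqν2
  -- κ * τ = cs
  have hcsκ : cs = κ * τ := by rw [hκ]; field_simp
  -- reduce the RHS
  rw [hqν, sub_self, sub_zero]
  set A := ∫ x, s ((qν - L x) / τ) ∂μ with hA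
  -- main estimate: κ * |qμ - qν| ≤ |A - β|
  have main : κ * |qμ - qν| ≤ |A - β| := by
    rcases le_total qν qμ with h | h
    · -- pointwise bound integrated over μ
      have hpt : ∀ x, κ * (qμ - qν) + s ((qν - L x) / τ) ≤ s ((qμ - L x) / τ) := by
        intro x
        have := soft_incr_aux s hs_diff hs_deriv_pos lo hi cs hcs
          (hmemμ x) (hmemν x) (by apply div_le_div_of_nonneg_right ?_ hτ.le; linarith)
        have heq : cs * ((qμ - L x) / τ - (qν - L x) / τ) = κ * (qμ - qν) := by
          rw [hcsκ]; field_simp; ring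
        linarith [heq ▸ this]
      have h2 : (∫ x, (κ * (qμ - qν) + s ((qν - L x) / τ)) ∂μ) ≤
          ∫ x, s ((qμ - L x) / τ) ∂μ :=
        integral_mono ((integrable_const _).add (hint qν μ)) (hint qμ μ) hpt
      rw [integral_add (integrable_const _) (hint qν μ), integral_const,
        probReal_univ, hqμ] at h2
      simp at h2
      rw [abs_of_nonneg (by linarith), abs_sub_comm]
      calc κ * (qμ - qν) ≤ β - A := by linarith
        _ ≤ |β - A| := le_abs_self _
    · have hpt : ∀ x, κ * (qν - qμ) + s ((qμ - L x) / τ) ≤ s ((qν - L x) / τ) := by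
        intro x
        have := soft_incr_aux s hs_diff hs_deriv_pos lo hi cs hcs
          (hmemν x) (hmemμ x) (by apply div_le_div_of_nonneg_right ?_ hτ.le; linarith)
        have heq : cs * ((qν - L x) / τ - (qμ - L x) / τ) = κ * (qν - qμ) := by
          rw [hcsκ]; field_simp; ring
        linarith [heq ▸ this]
      have h2 : (∫ x, (κ * (qν - qμ) + s ((qμ - L x) / τ)) ∂μ) ≤
          ∫ x, s ((qν - L x) / τ) ∂μ :=
        integral_mono ((integrable_const _).add (hint qμ μ)) (hint qν μ) hpt
      rw [integral_add (integrable_const _) (hint qμ μ), integral_const,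
        probReal_univ, hqμ] at h2
      simp at h2
      rw [abs_of_nonpos (by linarith)]
      calc κ * -(qμ - qν) = κ * (qν - qμ) := by ring
        _ ≤ A - β := by linarith
        _ ≤ |A - β| := le_abs_self _
  calc |qμ - qν| = κ⁻¹ * (κ * |qμ - qν|) := by field_simp
    _ ≤ κ⁻¹ * |A - β| := by
        exact mul_le_mul_of_nonneg_left main (inv_nonneg.mpr hκpos.le)
end

section
/- Under the standing hypotheses, for every Borel probability measure ρ on ℝ^d with finite fourth moment, the consensus point satisfies ‖m(ρ)‖₂⁴ ≤ β⁻¹ e^{4α(G_max − G_min)} ∫ ‖x‖₂⁴ dρ(x). -/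
open MeasureTheory Filter Topology

private lemma my_cs {α : Type*} [MeasurableSpace α] {μ : Measure α} {f g : α → ℝ}
    (hf : AEStronglyMeasurable f μ) (hg : AEStronglyMeasurable g μ)
    (hfn : ∀ x, 0 ≤ f x) (hgn : ∀ x, 0 ≤ g x)
    (hf2 : Integrable (fun x => f x ^ 2) μ) (hg2 : Integrable (fun x => g x ^ 2) μ) :
    (∫ x, f x * g x ∂μ) ^ 2 ≤ (∫ x, f x ^ 2 ∂μ) * (∫ x, g x ^ 2 ∂μ) := by
  have hpq : (2:ℝ).HolderConjugate 2 := ⟨by norm_num, by norm_num, by norm_num⟩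
  have h2 : (ENNReal.ofReal (2:ℝ)) = 2 := by norm_num
  have hmf : MemLp f (ENNReal.ofReal (2:ℝ)) μ := by
    rw [h2]; exact (memLp_two_iff_integrable_sq hf).2 hf2
  have hmg : MemLp g (ENNReal.ofReal (2:ℝ)) μ := by
    rw [h2]; exact (memLp_two_iff_integrable_sq hg).2 hg2
  have h := MeasureTheory.integral_mul_le_Lp_mul_Lq_of_nonneg hpq
    (Filter.Eventually.of_forall hfn) (Filter.Eventually.of_forall hgn) hmf hmg
  have e1 : ∀ (h : α → ℝ), (fun a => h a ^ (2:ℝ)) = fun a => h a ^ 2 := by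
    intro h; funext a; rw [show (2:ℝ) = ((2:ℕ):ℝ) by norm_num, Real.rpow_natCast]
  rw [e1 f, e1 g] at h
  have hF : 0 ≤ ∫ x, f x ^ 2 ∂μ := integral_nonneg fun x => sq_nonneg _
  have hG : 0 ≤ ∫ x, g x ^ 2 ∂μ := integral_nonneg fun x => sq_nonneg _
  have h' : ∫ x, f x * g x ∂μ ≤
      Real.sqrt (∫ x, f x ^ 2 ∂μ) * Real.sqrt (∫ x, g x ^ 2 ∂μ) := by
    rw [Real.sqrt_eq_rpow, Real.sqrt_eq_rpow]; exact h
  calc (∫ x, f x * g x ∂μ) ^ 2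
      ≤ (Real.sqrt (∫ x, f x ^ 2 ∂μ) * Real.sqrt (∫ x, g x ^ 2 ∂μ)) ^ 2 := by
        apply pow_le_pow_left₀ (integral_nonneg fun x => mul_nonneg (hfn x) (hgn x)) h'
    _ = (∫ x, f x ^ 2 ∂μ) * (∫ x, g x ^ 2 ∂μ) := by
        rw [mul_pow, Real.sq_sqrt hF, Real.sq_sqrt hG]

/-- Consensus-moment stability:
`‖m(ρ)‖₂⁴ ≤ β⁻¹ e^{4α(G_max - G_min)} ∫ ‖x‖₂⁴ dρ(x)`. -/
theorem consensus_moment_stability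
    (d : ℕ) (s : ℝ → ℝ)
    (hs_cont : Continuous s) (hs_mono : StrictMono s)
    (hs_pos : ∀ z, 0 < s z) (hs_lt1 : ∀ z, s z < 1)
    (hs_bot : Tendsto s atBot (𝓝 0)) (hs_top : Tendsto s atTop (𝓝 1))
    (β τ α : ℝ) (hβ : 0 < β ∧ β < 1) (hτ : 0 < τ) (hα : 0 < α)
    (L G : EuclideanSpace ℝ (Fin d) → ℝ) (hL : Measurable L) (hG : Measurable G)
    (Gmin Gmax : ℝ) (hGbd : ∀ x, Gmin ≤ G x ∧ G x ≤ Gmax)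
    (ρ : Measure (EuclideanSpace ℝ (Fin d))) [IsProbabilityMeasure ρ]
    (hmom4 : Integrable (fun x => ‖x‖ ^ 4) ρ)
    (q : ℝ) (hq : ∫ x, s ((q - L x) / τ) ∂ρ = β) :
    ‖(∫ x, Real.exp (-α * G x) * s ((q - L x) / τ) ∂ρ)⁻¹ •
        ∫ x, (Real.exp (-α * G x) * s ((q - L x) / τ)) • x ∂ρ‖ ^ 4
      ≤ β⁻¹ * Real.exp (4 * α * (Gmax - Gmin)) * ∫ x, ‖x‖ ^ 4 ∂ρ := by
  obtain ⟨hβ0, hβ1⟩ := hβ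
  set s' : EuclideanSpace ℝ (Fin d) → ℝ := fun x => s ((q - L x) / τ) with hs'def
  set w : EuclideanSpace ℝ (Fin d) → ℝ := fun x => Real.exp (-α * G x) * s' x with hwdef
  have hs'_meas : Measurable s' :=
    hs_cont.measurable.comp ((measurable_const.sub hL).div_const τ)
  have hw_meas : Measurable w :=
    ((hG.const_mul (-α)).exp).mul hs'_meas
  have hs'_pos : ∀ x, 0 < s' x := fun x => hs_pos _
  have hs'_le1 : ∀ x, s' x ≤ 1 := fun x => le_of_lt (hs_lt1 _)
  -- majorant facts
  have hmaj : Integrable (fun x : EuclideanSpace ℝ (Fin d) => 1 + ‖x‖ ^ 4) ρ :=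
    (integrable_const 1).add hmom4
  have ht4 : ∀ t : ℝ, 0 ≤ t → t ≤ 1 + t ^ 4 := by
    intro t ht; nlinarith [sq_nonneg (t^2 - 1), sq_nonneg (t - 1), sq_nonneg t, sq_nonneg (t^2 - t)]
  have ht2 : ∀ t : ℝ, 0 ≤ t → t ^ 2 ≤ 1 + t ^ 4 := by
    intro t ht; nlinarith [sq_nonneg (t^2 - 1)]
  -- integrability
  have int_s : Integrable s' ρ := by
    apply Integrable.mono' (integrable_const (1:ℝ)) hs'_meas.aestronglyMeasurable
    exact Filter.Eventually.of_forall fun x => by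
      rw [Real.norm_eq_abs, abs_of_pos (hs'_pos x)]; exact hs'_le1 x
  have int_s1 : Integrable (fun x => s' x * ‖x‖) ρ := by
    apply Integrable.mono' hmaj
      (hs'_meas.mul measurable_norm).aestronglyMeasurable
    refine Filter.Eventually.of_forall fun x => ?_
    simp only [Pi.mul_apply]
    rw [Real.norm_eq_abs, abs_of_nonneg (mul_nonneg (hs'_pos x).le (norm_nonneg x))]
    calc s' x * ‖x‖ ≤ 1 * ‖x‖ := by
          apply mul_le_mul_of_nonneg_right (hs'_le1 x) (norm_nonneg x)
      _ = ‖x‖ := one_mul _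
      _ ≤ 1 + ‖x‖ ^ 4 := ht4 _ (norm_nonneg x)
  have int_s2 : Integrable (fun x => s' x * ‖x‖ ^ 2) ρ := by
    apply Integrable.mono' hmaj
      (hs'_meas.mul (measurable_norm.pow_const 2)).aestronglyMeasurable
    refine Filter.Eventually.of_forall fun x => ?_
    simp only [Pi.mul_apply]
    rw [Real.norm_eq_abs, abs_of_nonneg (mul_nonneg (hs'_pos x).le (by positivity))]
    calc s' x * ‖x‖ ^ 2 ≤ 1 * ‖x‖ ^ 2 := by
          apply mul_le_mul_of_nonneg_right (hs'_le1 x) (by positivity)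
      _ = ‖x‖ ^ 2 := one_mul _
      _ ≤ 1 + ‖x‖ ^ 4 := ht2 _ (norm_nonneg x)
  have int_s4 : Integrable (fun x => s' x * ‖x‖ ^ 4) ρ := by
    apply Integrable.mono' hmom4
      (hs'_meas.mul (measurable_norm.pow_const 4)).aestronglyMeasurable
    refine Filter.Eventually.of_forall fun x => ?_
    simp only [Pi.mul_apply]
    rw [Real.norm_eq_abs, abs_of_nonneg (mul_nonneg (hs'_pos x).le (by positivity))]
    calc s' x * ‖x‖ ^ 4 ≤ 1 * ‖x‖ ^ 4 := by
          apply mul_le_mul_of_nonneg_right (hs'_le1 x) (by positivity)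
      _ = ‖x‖ ^ 4 := one_mul _
  have int_w : Integrable w ρ := by
    apply Integrable.mono' (integrable_const (Real.exp (-α * Gmin))) hw_meas.aestronglyMeasurable
    refine Filter.Eventually.of_forall fun x => ?_
    rw [Real.norm_eq_abs, abs_of_nonneg (mul_nonneg (Real.exp_nonneg _) (hs'_pos x).le)]
    calc Real.exp (-α * G x) * s' x ≤ Real.exp (-α * G x) * 1 :=
          mul_le_mul_of_nonneg_left (hs'_le1 x) (Real.exp_nonneg _)
      _ = Real.exp (-α * G x) := mul_one _
      _ ≤ Real.exp (-α * Gmin) := Real.exp_le_exp.2 (by nlinarith [(hGbd x).1])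
  have int_wx : Integrable (fun x => w x • x) ρ := by
    apply Integrable.mono' (hmaj.const_mul (Real.exp (-α * Gmin)))
      (hw_meas.aestronglyMeasurable.smul aestronglyMeasurable_id)
    refine Filter.Eventually.of_forall fun x => ?_
    show ‖w x • x‖ ≤ _
    rw [norm_smul, Real.norm_eq_abs,
      abs_of_nonneg (mul_nonneg (Real.exp_nonneg _) (hs'_pos x).le)]
    have hw_le : w x ≤ Real.exp (-α * Gmin) := by
      calc w x ≤ Real.exp (-α * G x) * 1 :=
            mul_le_mul_of_nonneg_left (hs'_le1 x) (Real.exp_nonneg _)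
        _ = Real.exp (-α * G x) := mul_one _
        _ ≤ Real.exp (-α * Gmin) := Real.exp_le_exp.2 (by nlinarith [(hGbd x).1])
    calc w x * ‖x‖ ≤ Real.exp (-α * Gmin) * ‖x‖ :=
          mul_le_mul_of_nonneg_right hw_le (norm_nonneg x)
      _ ≤ Real.exp (-α * Gmin) * (1 + ‖x‖ ^ 4) :=
          mul_le_mul_of_nonneg_left (ht4 _ (norm_nonneg x)) (Real.exp_nonneg _)
  -- notation for the key integrals
  set B : ℝ := ∫ x, w x ∂ρ with hBdef
  set A : EuclideanSpace ℝ (Fin d) := ∫ x, w x • x ∂ρ with hAdef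
  set I1 : ℝ := ∫ x, s' x * ‖x‖ ∂ρ with hI1def
  set I2 : ℝ := ∫ x, s' x * ‖x‖ ^ 2 ∂ρ with hI2def
  set I4 : ℝ := ∫ x, s' x * ‖x‖ ^ 4 ∂ρ with hI4def
  set J : ℝ := ∫ x, ‖x‖ ^ 4 ∂ρ with hJdef
  have hJ0 : 0 ≤ J := integral_nonneg fun x => by positivity
  have hI10 : 0 ≤ I1 := integral_nonneg fun x => mul_nonneg (hs'_pos x).le (norm_nonneg x)
  have hI20 : 0 ≤ I2 := integral_nonneg fun x => mul_nonneg (hs'_pos x).le (by positivity)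
  have hI40 : 0 ≤ I4 := integral_nonneg fun x => mul_nonneg (hs'_pos x).le (by positivity)
  have hI4J : I4 ≤ J := by
    apply integral_mono int_s4 hmom4
    intro x
    calc s' x * ‖x‖ ^ 4 ≤ 1 * ‖x‖ ^ 4 :=
          mul_le_mul_of_nonneg_right (hs'_le1 x) (by positivity)
      _ = ‖x‖ ^ 4 := one_mul _
  -- lower bound on B
  have hBlow : Real.exp (-α * Gmax) * β ≤ B := by
    rw [← hq, ← integral_const_mul]
    apply integral_mono (int_s.const_mul _) int_w
    intro x
    apply mul_le_mul_of_nonneg_right _ (hs'_pos x).le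
    exact Real.exp_le_exp.2 (by nlinarith [(hGbd x).2])
  have hBpos : 0 < B := lt_of_lt_of_le (mul_pos (Real.exp_pos _) hβ0) hBlow
  -- upper bound on ‖A‖
  have hA : ‖A‖ ≤ Real.exp (-α * Gmin) * I1 := by
    calc ‖A‖ ≤ ∫ x, ‖w x • x‖ ∂ρ := norm_integral_le_integral_norm _
      _ ≤ ∫ x, Real.exp (-α * Gmin) * (s' x * ‖x‖) ∂ρ := by
          apply integral_mono int_wx.norm ((int_s1.const_mul _))
          intro x
          show ‖w x • x‖ ≤ Real.exp (-α * Gmin) * (s' x * ‖x‖)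
          rw [norm_smul, Real.norm_eq_abs,
            abs_of_nonneg (mul_nonneg (Real.exp_nonneg _) (hs'_pos x).le)]
          have : Real.exp (-α * G x) ≤ Real.exp (-α * Gmin) :=
            Real.exp_le_exp.2 (by nlinarith [(hGbd x).1])
          calc Real.exp (-α * G x) * s' x * ‖x‖
              ≤ Real.exp (-α * Gmin) * s' x * ‖x‖ := by
                apply mul_le_mul_of_nonneg_right _ (norm_nonneg x)
                exact mul_le_mul_of_nonneg_right this (hs'_pos x).le
            _ = Real.exp (-α * Gmin) * (s' x * ‖x‖) := by ring
      _ = Real.exp (-α * Gmin) * I1 := integral_const_mul _ _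
  -- Cauchy–Schwarz, twice
  have sqrt_meas : AEStronglyMeasurable (fun x => Real.sqrt (s' x)) ρ :=
    (hs'_meas.sqrt).aestronglyMeasurable
  have m1 : AEStronglyMeasurable (fun x : EuclideanSpace ℝ (Fin d) => Real.sqrt (s' x) * ‖x‖) ρ :=
    (hs'_meas.sqrt.mul measurable_norm).aestronglyMeasurable
  have m2 : AEStronglyMeasurable
      (fun x : EuclideanSpace ℝ (Fin d) => Real.sqrt (s' x) * ‖x‖ ^ 2) ρ :=
    (hs'_meas.sqrt.mul (measurable_norm.pow_const 2)).aestronglyMeasurable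
  have sq_s' : (fun x => Real.sqrt (s' x) ^ 2) = s' := by
    funext x; exact Real.sq_sqrt (hs'_pos x).le
  have ef1 : (fun x : EuclideanSpace ℝ (Fin d) =>
      Real.sqrt (s' x) * (Real.sqrt (s' x) * ‖x‖)) = fun x => s' x * ‖x‖ := by
    funext x; rw [← mul_assoc, Real.mul_self_sqrt (hs'_pos x).le]
  have ef2 : (fun x : EuclideanSpace ℝ (Fin d) =>
      (Real.sqrt (s' x) * ‖x‖) ^ 2) = fun x => s' x * ‖x‖ ^ 2 := by
    funext x; rw [mul_pow, Real.sq_sqrt (hs'_pos x).le]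
  have ef3 : (fun x : EuclideanSpace ℝ (Fin d) =>
      Real.sqrt (s' x) * (Real.sqrt (s' x) * ‖x‖ ^ 2)) = fun x => s' x * ‖x‖ ^ 2 := by
    funext x; rw [← mul_assoc, Real.mul_self_sqrt (hs'_pos x).le]
  have ef4 : (fun x : EuclideanSpace ℝ (Fin d) =>
      (Real.sqrt (s' x) * ‖x‖ ^ 2) ^ 2) = fun x => s' x * ‖x‖ ^ 4 := by
    funext x; rw [mul_pow, Real.sq_sqrt (hs'_pos x).le, ← pow_mul]
  have cs1 : I1 ^ 2 ≤ β * I2 := by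
    have h := my_cs (μ := ρ) (f := fun x => Real.sqrt (s' x))
      (g := fun x : EuclideanSpace ℝ (Fin d) => Real.sqrt (s' x) * ‖x‖)
      sqrt_meas m1
      (fun x => Real.sqrt_nonneg _) (fun x => mul_nonneg (Real.sqrt_nonneg _) (norm_nonneg _))
      (by rw [sq_s']; exact int_s)
      (by rw [ef2]; exact int_s2)
    rw [show (fun x : EuclideanSpace ℝ (Fin d) =>
        Real.sqrt (s' x) * (Real.sqrt (s' x) * ‖x‖)) = fun x => s' x * ‖x‖ from ef1] at h
    rw [sq_s', ef2] at h
    rw [hq] at h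
    exact h
  have cs2 : I2 ^ 2 ≤ β * I4 := by
    have h := my_cs (μ := ρ) (f := fun x => Real.sqrt (s' x))
      (g := fun x : EuclideanSpace ℝ (Fin d) => Real.sqrt (s' x) * ‖x‖ ^ 2)
      sqrt_meas m2
      (fun x => Real.sqrt_nonneg _)
      (fun x => mul_nonneg (Real.sqrt_nonneg _) (by positivity))
      (by rw [sq_s']; exact int_s)
      (by rw [ef4]; exact int_s4)
    rw [ef3, sq_s', ef4, hq] at h
    exact h
  -- combine
  have hI14 : I1 ^ 4 ≤ β ^ 3 * J := by
    have h1 : I1 ^ 4 = (I1 ^ 2) ^ 2 := by ring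
    have h2 : (I1 ^ 2) ^ 2 ≤ (β * I2) ^ 2 := pow_le_pow_left₀ (sq_nonneg _) cs1 2
    have h3 : (β * I2) ^ 2 = β ^ 2 * I2 ^ 2 := by ring
    have h4 : β ^ 2 * I2 ^ 2 ≤ β ^ 2 * (β * I4) :=
      mul_le_mul_of_nonneg_left cs2 (sq_nonneg β)
    have h5 : β ^ 2 * (β * I4) ≤ β ^ 2 * (β * J) := by
      apply mul_le_mul_of_nonneg_left _ (sq_nonneg β)
      exact mul_le_mul_of_nonneg_left hI4J hβ0.le
    nlinarith
  have hA4 : ‖A‖ ^ 4 ≤ Real.exp (-α * Gmin) ^ 4 * (β ^ 3 * J) := by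
    calc ‖A‖ ^ 4 ≤ (Real.exp (-α * Gmin) * I1) ^ 4 :=
          pow_le_pow_left₀ (norm_nonneg _) hA 4
      _ = Real.exp (-α * Gmin) ^ 4 * I1 ^ 4 := by ring
      _ ≤ Real.exp (-α * Gmin) ^ 4 * (β ^ 3 * J) :=
          mul_le_mul_of_nonneg_left hI14 (by positivity)
  have hBinv : B⁻¹ ≤ (Real.exp (-α * Gmax) * β)⁻¹ :=
    inv_anti₀ (mul_pos (Real.exp_pos _) hβ0) hBlow
  have lhs_eq : ‖B⁻¹ • A‖ ^ 4 = (B⁻¹) ^ 4 * ‖A‖ ^ 4 := by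
    rw [norm_smul, Real.norm_eq_abs, abs_of_pos (inv_pos.2 hBpos)]; ring
  have step : (B⁻¹) ^ 4 * ‖A‖ ^ 4
      ≤ ((Real.exp (-α * Gmax) * β)⁻¹) ^ 4 * (Real.exp (-α * Gmin) ^ 4 * (β ^ 3 * J)) := by
    apply mul_le_mul
    · exact pow_le_pow_left₀ (inv_nonneg.2 hBpos.le) hBinv 4
    · exact hA4
    · positivity
    · exact pow_nonneg (inv_nonneg.2 (mul_nonneg (Real.exp_pos _).le hβ0.le)) 4
  have final_eq : ((Real.exp (-α * Gmax) * β)⁻¹) ^ 4 * (Real.exp (-α * Gmin) ^ 4 * (β ^ 3 * J))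
      = β⁻¹ * Real.exp (4 * α * (Gmax - Gmin)) * J := by
    have e1 : Real.exp (4 * α * (Gmax - Gmin))
        = (Real.exp (α * Gmax) * Real.exp (-α * Gmin)) ^ 4 := by
      rw [← Real.exp_add, ← Real.exp_nat_mul]
      congr 1; push_cast; ring
    have e2 : (Real.exp (-α * Gmax))⁻¹ = Real.exp (α * Gmax) := by
      rw [← Real.exp_neg]; congr 1; ring
    rw [e1, mul_inv, mul_pow, e2]
    have hβne : β ≠ 0 := ne_of_gt hβ0
    field_simp
  calc ‖B⁻¹ • A‖ ^ 4 = (B⁻¹) ^ 4 * ‖A‖ ^ 4 := lhs_eq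
    _ ≤ ((Real.exp (-α * Gmax) * β)⁻¹) ^ 4 * (Real.exp (-α * Gmin) ^ 4 * (β ^ 3 * J)) := step
    _ = β⁻¹ * Real.exp (4 * α * (Gmax - Gmin)) * J := final_eq
end

section
/- Under the standing hypotheses, for every N ∈ ℕ and every pair of configurations x = (x¹,…,x^N), y = (y¹,…,y^N) ∈ (ℝ^d)^N, the empirical soft β-quantiles satisfy |Q_N(x) − Q_N(y)| ≤ (L_s L_L)/(κ τ √N) · ‖x − y‖_{N,2}. -/
open MeasureTheory Filter Topology

/-- Global Lipschitz property of the empirical soft quantile map: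
`|Q_N(x) - Q_N(y)| ≤ (L_s L_L)/(κ τ √N) ‖x - y‖_{N,2}`. -/
theorem empirical_quantile_lipschitz
    (d : ℕ) (s : ℝ → ℝ)
    (hs_diff : ContDiff ℝ 1 s) (hs_mono : StrictMono s)
    (hs_pos : ∀ z, 0 < s z) (hs_lt1 : ∀ z, s z < 1)
    (hs_deriv_pos : ∀ z, 0 < deriv s z)
    (hs_bot : Tendsto s atBot (𝓝 0)) (hs_top : Tendsto s atTop (𝓝 1))
    (Ls : ℝ) (hLs : ∀ a b : ℝ, |s a - s b| ≤ Ls * |a - b|)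
    (β τ : ℝ) (hβ : 0 < β ∧ β < 1) (hτ : 0 < τ)
    (L : EuclideanSpace ℝ (Fin d) → ℝ)
    (LL : ℝ) (hLlip : ∀ x y, |L x - L y| ≤ LL * ‖x - y‖)
    (Lmin Lmax : ℝ) (hLbd : ∀ x, Lmin ≤ L x ∧ L x ≤ Lmax)
    (zβ : ℝ) (hzβ : s zβ = β)
    (cs κ : ℝ)
    (hcs : cs = sInf (deriv s ''
      Set.Icc (zβ - (Lmax - Lmin) / τ) (zβ + (Lmax - Lmin) / τ)))
    (hκ : κ = cs / τ) (hκpos : 0 < κ)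
    (N : ℕ) (x y : Fin N → EuclideanSpace ℝ (Fin d))
    (Qx Qy : ℝ)
    (hQx : (1 / (N : ℝ)) * ∑ i, s ((Qx - L (x i)) / τ) = β)
    (hQy : (1 / (N : ℝ)) * ∑ i, s ((Qy - L (y i)) / τ) = β) :
    |Qx - Qy| ≤ (Ls * LL) / (κ * τ * Real.sqrt N)
      * Real.sqrt (∑ i, ‖x i - y i‖ ^ 2) := by
  -- N is positive
  have hN : 0 < N := by
    rcases Nat.eq_zero_or_pos N with h | h
    · exfalso; subst h; simp at hQx; linarith [hβ.1, hQx]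
    · exact h
  have hNr : (0:ℝ) < N := Nat.cast_pos.mpr hN
  have hs' : Differentiable ℝ s := hs_diff.differentiable one_ne_zero
  have hLs0 : 0 < Ls := by
    have h1 : s 0 < s 1 := hs_mono one_pos
    have h2 := hLs 1 0
    rw [abs_of_pos (by linarith : (0:ℝ) < s 1 - s 0)] at h2
    norm_num at h2
    linarith
  -- the relevant intervals
  set J := Set.Icc (zβ - (Lmax - Lmin) / τ) (zβ + (Lmax - Lmin) / τ) with hJdef
  set I := Set.Icc (Lmin + τ * zβ) (Lmax + τ * zβ) with hIdef
  have hcs_le : ∀ z ∈ J, cs ≤ deriv s z := by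
    intro z hz
    rw [hcs]
    exact csInf_le ⟨0, by rintro w ⟨u, _, rfl⟩; exact (hs_deriv_pos u).le⟩ ⟨z, hz, rfl⟩
  -- any soft quantile lies in I
  have hmem : ∀ (g : Fin N → ℝ), (∀ i, Lmin ≤ g i ∧ g i ≤ Lmax) → ∀ Q : ℝ,
      (1 / (N : ℝ)) * ∑ i, s ((Q - g i) / τ) = β → Q ∈ I := by
    intro g hg Q hQ
    have hsum : (∑ i, s ((Q - g i) / τ)) = (N:ℝ) * β := by
      rw [← hQ]; field_simp
    constructor
    · have h1 : (N:ℝ) * β ≤ (N:ℝ) * s ((Q - Lmin) / τ) := by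
        rw [← hsum]
        calc (∑ i, s ((Q - g i) / τ)) ≤ ∑ _i : Fin N, s ((Q - Lmin) / τ) :=
              Finset.sum_le_sum (fun i _ => hs_mono.monotone
                ((div_le_div_iff_of_pos_right hτ).mpr (by linarith [(hg i).1])))
          _ = (N:ℝ) * s ((Q - Lmin) / τ) := by
              simp [Finset.sum_const, nsmul_eq_mul]
      have h2 : β ≤ s ((Q - Lmin) / τ) := le_of_mul_le_mul_left h1 hNr
      have h3 : zβ ≤ (Q - Lmin) / τ := hs_mono.le_iff_le.mp (by rw [hzβ]; exact h2)
      rw [le_div_iff₀ hτ] at h3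
      nlinarith
    · have h1 : (N:ℝ) * s ((Q - Lmax) / τ) ≤ (N:ℝ) * β := by
        rw [← hsum]
        calc (N:ℝ) * s ((Q - Lmax) / τ) = ∑ _i : Fin N, s ((Q - Lmax) / τ) := by
              simp [Finset.sum_const, nsmul_eq_mul]
          _ ≤ ∑ i, s ((Q - g i) / τ) :=
              Finset.sum_le_sum (fun i _ => hs_mono.monotone
                ((div_le_div_iff_of_pos_right hτ).mpr (by linarith [(hg i).2])))
      have h2 : s ((Q - Lmax) / τ) ≤ β := le_of_mul_le_mul_left h1 hNr
      have h3 : (Q - Lmax) / τ ≤ zβ := hs_mono.le_iff_le.mp (by rw [hzβ]; exact h2)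
      rw [div_le_iff₀ hτ] at h3
      nlinarith
  have hQxI : Qx ∈ I := hmem (fun i => L (x i)) (fun i => hLbd (x i)) Qx hQx
  have hQyI : Qy ∈ I := hmem (fun i => L (y i)) (fun i => hLbd (y i)) Qy hQy
  -- the function F based on configuration x
  set F : ℝ → ℝ := fun q => (1 / (N : ℝ)) * ∑ i, s ((q - L (x i)) / τ) with hFdef
  have hFQx : F Qx = β := hQx
  have hF : ∀ q, HasDerivAt F
      ((1 / (N : ℝ)) * ∑ i, deriv s ((q - L (x i)) / τ) * (1 / τ)) q := by
    intro q
    have h : ∀ i ∈ Finset.univ, HasDerivAt (fun q => s ((q - L (x i)) / τ))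
        (deriv s ((q - L (x i)) / τ) * (1 / τ)) q := by
      intro i _
      have h1 : HasDerivAt (fun q : ℝ => (q - L (x i)) / τ) (1 / τ) q := by
        simpa using ((hasDerivAt_id q).sub_const (L (x i))).div_const τ
      exact ((hs' _).hasDerivAt).comp q h1
    exact (HasDerivAt.fun_sum h).const_mul _
  have hFdiff : Differentiable ℝ F := fun q => (hF q).differentiableAt
  -- derivative bound on I
  have hbound : ∀ q ∈ I, κ ≤ deriv F q := by
    intro q hq
    rw [(hF q).deriv]
    have hterm : ∀ i : Fin N, κ ≤ deriv s ((q - L (x i)) / τ) * (1 / τ) := by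
      intro i
      have hmemJ : (q - L (x i)) / τ ∈ J := by
        constructor
        · rw [le_div_iff₀ hτ, sub_mul, div_mul_cancel₀ _ hτ.ne']
          have := hq.1; have := (hLbd (x i)).2
          simp only [hIdef, Set.mem_Icc] at hq
          linarith [hq.1, (hLbd (x i)).2]
        · rw [div_le_iff₀ hτ, add_mul, div_mul_cancel₀ _ hτ.ne']
          simp only [hIdef, Set.mem_Icc] at hq
          linarith [hq.2, (hLbd (x i)).1]
      have h := hcs_le _ hmemJ
      rw [hκ, div_eq_mul_one_div]
      exact mul_le_mul_of_nonneg_right h (by positivity)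
    calc κ = (1 / (N:ℝ)) * ∑ _i : Fin N, κ := by
          simp [Finset.sum_const, nsmul_eq_mul]; field_simp
      _ ≤ (1 / (N:ℝ)) * ∑ i, deriv s ((q - L (x i)) / τ) * (1 / τ) :=
          mul_le_mul_of_nonneg_left (Finset.sum_le_sum fun i _ => hterm i) (by positivity)
  -- κ-growth of F on I
  have hgrow : ∀ a ∈ I, ∀ b ∈ I, a ≤ b → κ * (b - a) ≤ F b - F a := by
    intro a ha b hb hab
    exact (convex_Icc _ _).mul_sub_le_image_sub_of_le_deriv
      hFdiff.continuous.continuousOn hFdiff.differentiableOn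
      (fun q hq => hbound q (interior_subset hq)) a ha b hb hab
  have key : κ * |Qx - Qy| ≤ |F Qy - F Qx| := by
    rcases le_total Qx Qy with h | h
    · calc κ * |Qx - Qy| = κ * (Qy - Qx) := by
            rw [abs_sub_comm, abs_of_nonneg (by linarith)]
        _ ≤ F Qy - F Qx := hgrow _ hQxI _ hQyI h
        _ ≤ |F Qy - F Qx| := le_abs_self _
    · calc κ * |Qx - Qy| = κ * (Qx - Qy) := by rw [abs_of_nonneg (by linarith)]
        _ ≤ F Qx - F Qy := hgrow _ hQyI _ hQxI h
        _ = -(F Qy - F Qx) := by ring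
        _ ≤ |F Qy - F Qx| := neg_le_abs _
  rcases le_or_gt 0 LL with hLL | hLL
  · -- main case : LL ≥ 0
    have hterm2 : ∀ i : Fin N, |s ((Qy - L (x i)) / τ) - s ((Qy - L (y i)) / τ)|
        ≤ (Ls / τ) * (LL * ‖x i - y i‖) := by
      intro i
      have h1 := hLs ((Qy - L (x i)) / τ) ((Qy - L (y i)) / τ)
      have h2 : |(Qy - L (x i)) / τ - (Qy - L (y i)) / τ| = |L (x i) - L (y i)| / τ := by
        rw [div_sub_div_same,
          show (Qy - L (x i)) - (Qy - L (y i)) = -(L (x i) - L (y i)) by ring,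
          neg_div, abs_neg, abs_div, abs_of_pos hτ]
      rw [h2] at h1
      have h3 := hLlip (x i) (y i)
      calc |s ((Qy - L (x i)) / τ) - s ((Qy - L (y i)) / τ)|
          ≤ Ls * (|L (x i) - L (y i)| / τ) := h1
        _ ≤ Ls * ((LL * ‖x i - y i‖) / τ) := by
            apply mul_le_mul_of_nonneg_left _ hLs0.le
            exact (div_le_div_iff_of_pos_right hτ).mpr h3
        _ = (Ls / τ) * (LL * ‖x i - y i‖) := by ring
    have hdiff : F Qy - F Qx = (1 / (N:ℝ)) *
        ∑ i, (s ((Qy - L (x i)) / τ) - s ((Qy - L (y i)) / τ)) := by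
      rw [hFQx, ← hQy, Finset.sum_sub_distrib]
      simp only [hFdef]
      ring
    have habs : |F Qy - F Qx| ≤ (1 / (N:ℝ)) * ∑ i, (Ls / τ) * (LL * ‖x i - y i‖) := by
      rw [hdiff, abs_mul, abs_of_pos (by positivity : (0:ℝ) < 1 / (N:ℝ))]
      apply mul_le_mul_of_nonneg_left _ (by positivity)
      exact (Finset.abs_sum_le_sum_abs _ _).trans
        (Finset.sum_le_sum fun i _ => hterm2 i)
    set S := Real.sqrt (∑ i, ‖x i - y i‖ ^ 2) with hSdef
    have hS0 : 0 ≤ S := Real.sqrt_nonneg _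
    have hCS : ∑ i, ‖x i - y i‖ ≤ Real.sqrt N * S := by
      have h1 : (∑ i, ‖x i - y i‖) ^ 2 ≤ (N:ℝ) * ∑ i, ‖x i - y i‖ ^ 2 := by
        have := sq_sum_le_card_mul_sum_sq (s := (Finset.univ : Finset (Fin N)))
          (f := fun i => ‖x i - y i‖)
        simpa using this
      calc ∑ i, ‖x i - y i‖ = Real.sqrt ((∑ i, ‖x i - y i‖) ^ 2) := by
            rw [Real.sqrt_sq (by positivity)]
        _ ≤ Real.sqrt ((N:ℝ) * ∑ i, ‖x i - y i‖ ^ 2) := Real.sqrt_le_sqrt h1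
        _ = Real.sqrt N * S := by rw [Real.sqrt_mul (by positivity)]
    have hmain : κ * |Qx - Qy| ≤ (Ls * LL / τ) * (Real.sqrt N * S) / N := by
      calc κ * |Qx - Qy| ≤ |F Qy - F Qx| := key
        _ ≤ (1 / (N:ℝ)) * ∑ i, (Ls / τ) * (LL * ‖x i - y i‖) := habs
        _ = (1 / (N:ℝ)) * (Ls * LL / τ) * ∑ i, ‖x i - y i‖ := by
            rw [show (∑ i, (Ls / τ) * (LL * ‖x i - y i‖))
                = (Ls * LL / τ) * ∑ i, ‖x i - y i‖ by
              rw [Finset.mul_sum]; exact Finset.sum_congr rfl fun i _ => by ring]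
            ring
        _ ≤ (1 / (N:ℝ)) * (Ls * LL / τ) * (Real.sqrt N * S) :=
            mul_le_mul_of_nonneg_left hCS (by positivity)
        _ = (Ls * LL / τ) * (Real.sqrt N * S) / N := by ring
    have hsqrtN : (0:ℝ) < Real.sqrt N := Real.sqrt_pos.mpr hNr
    have h2 : (Ls * LL / τ) * (Real.sqrt N * S) / N / κ
        = (Ls * LL) / (κ * τ * Real.sqrt N) * S := by
      field_simp
      linear_combination (LL * S) * (Real.mul_self_sqrt hNr.le)
    calc |Qx - Qy| ≤ (Ls * LL / τ) * (Real.sqrt N * S) / N / κ := by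
          rw [le_div_iff₀ hκpos]; linarith
      _ = (Ls * LL) / (κ * τ * Real.sqrt N) * S := h2
  · -- degenerate case : LL < 0 forces x = y
    have hxy : ∀ i, x i = y i := by
      intro i
      have h1 := hLlip (x i) (y i)
      have h2 : (0:ℝ) ≤ ‖x i - y i‖ := norm_nonneg _
      have h3 : ‖x i - y i‖ = 0 := by
        nlinarith [abs_nonneg (L (x i) - L (y i))]
      rwa [norm_sub_eq_zero_iff] at h3
    have hFy : F Qy = β := by
      rw [← hQy]
      simp only [hFdef]
      congr 1
      exact Finset.sum_congr rfl fun i _ => by rw [hxy i]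
    have h0 : |Qx - Qy| = 0 := by
      have := key
      rw [hFy, hFQx, sub_self, abs_zero] at this
      nlinarith [abs_nonneg (Qx - Qy)]
    rw [h0]
    have hz : (∑ i, ‖x i - y i‖ ^ 2) = 0 :=
      Finset.sum_eq_zero fun i _ => by rw [hxy i]; simp
    rw [hz, Real.sqrt_zero, mul_zero]
end

section
/- Under the standing hypotheses, for every N ∈ ℕ and every R > 0 there exists a finite constant C > 0 such that for all configurations x, y ∈ (ℝ^d)^N with ‖x‖_{N,2} ≤ R and ‖y‖_{N,2} ≤ R, the empirical consensus points satisfy ‖𝔪_N(x) − 𝔪_N(y)‖₂ ≤ C ‖x − y‖_{N,2}. -/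
open MeasureTheory Filter Topology

lemma exp_lip' {a b M : ℝ} (ha : a ≤ M) (hb : b ≤ M) :
    |Real.exp a - Real.exp b| ≤ Real.exp M * |a - b| := by
  wlog hab : b ≤ a generalizing a b
  · rw [abs_sub_comm, abs_sub_comm a b]; exact this hb ha (le_of_not_ge hab)
  rw [abs_of_nonneg (sub_nonneg.2 (Real.exp_le_exp.2 hab)), abs_of_nonneg (sub_nonneg.2 hab)]
  have h2 : Real.exp b = Real.exp a * Real.exp (b - a) := by
    rw [← Real.exp_add]; ring_nf
  have h3 := Real.add_one_le_exp (b - a)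
  have h4 : Real.exp a ≤ Real.exp M := Real.exp_le_exp.2 ha
  nlinarith [Real.exp_pos a, sub_nonneg.2 hab]

set_option maxHeartbeats 2000000 in
/-- Local Lipschitz continuity of the empirical consensus map: for every `N` and every
`R > 0` there is a finite constant `C > 0` with
`‖𝔪_N(x) - 𝔪_N(y)‖ ≤ C ‖x - y‖_{N,2}` on the product ball of radius `R`. -/
theorem empirical_consensus_local_lipschitz
    (d : ℕ) (s : ℝ → ℝ)
    (hs_diff : ContDiff ℝ 1 s) (hs_mono : StrictMono s)
    (hs_pos : ∀ z, 0 < s z) (hs_lt1 : ∀ z, s z < 1)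
    (hs_deriv_pos : ∀ z, 0 < deriv s z)
    (hs_bot : Tendsto s atBot (𝓝 0)) (hs_top : Tendsto s atTop (𝓝 1))
    (Ls : ℝ) (hLs : ∀ a b : ℝ, |s a - s b| ≤ Ls * |a - b|)
    (β τ α : ℝ) (hβ : 0 < β ∧ β < 1) (hτ : 0 < τ) (hα : 0 < α)
    (L G : EuclideanSpace ℝ (Fin d) → ℝ)
    (LL : ℝ) (hLlip : ∀ x y, |L x - L y| ≤ LL * ‖x - y‖)
    (LG : ℝ) (hGlip : ∀ x y, |G x - G y| ≤ LG * ‖x - y‖)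
    (Lmin Lmax : ℝ) (hLbd : ∀ x, Lmin ≤ L x ∧ L x ≤ Lmax)
    (Gmin Gmax : ℝ) (hGbd : ∀ x, Gmin ≤ G x ∧ G x ≤ Gmax)
    (N : ℕ) (R : ℝ) (hR : 0 < R) :
    ∃ C : ℝ, 0 < C ∧
      ∀ (x y : Fin N → EuclideanSpace ℝ (Fin d)) (Qx Qy : ℝ),
        Real.sqrt (∑ i, ‖x i‖ ^ 2) ≤ R →
        Real.sqrt (∑ i, ‖y i‖ ^ 2) ≤ R →
        ((1 / (N : ℝ)) * ∑ i, s ((Qx - L (x i)) / τ) = β) →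
        ((1 / (N : ℝ)) * ∑ i, s ((Qy - L (y i)) / τ) = β) →
        ‖(∑ i, Real.exp (-α * G (x i)) * s ((Qx - L (x i)) / τ))⁻¹ •
              (∑ i, (Real.exp (-α * G (x i)) * s ((Qx - L (x i)) / τ)) • x i)
          - (∑ i, Real.exp (-α * G (y i)) * s ((Qy - L (y i)) / τ))⁻¹ •
              (∑ i, (Real.exp (-α * G (y i)) * s ((Qy - L (y i)) / τ)) • y i)‖
          ≤ C * Real.sqrt (∑ i, ‖x i - y i‖ ^ 2) := by
  rcases Nat.eq_zero_or_pos N with hN0 | hN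
  · -- N = 0 : hypotheses are contradictory
    subst hN0
    refine ⟨1, one_pos, fun x y Qx Qy _ _ hQx _ => ?_⟩
    simp at hQx
    exact absurd hQx.symm (ne_of_gt hβ.1)
  -- now N ≥ 1
  have hNR : (0:ℝ) < N := by exact_mod_cast hN
  have hNne : (N:ℝ) ≠ 0 := ne_of_gt hNR
  have hLmm : Lmin ≤ Lmax := le_trans (hLbd 0).1 (hLbd 0).2
  -- the quantile level point
  obtain ⟨zβ, hzβ⟩ : ∃ z, s z = β := by
    obtain ⟨a, ha⟩ := (hs_bot.eventually_lt_const hβ.1).exists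
    obtain ⟨b, hb⟩ := (hs_top.eventually_const_lt hβ.2).exists
    have hab : a ≤ b := by
      by_contra h
      exact absurd (hs_mono.lt_iff_lt.mpr (lt_of_not_ge h)) (by linarith)
    obtain ⟨z, _, hz⟩ := intermediate_value_Icc hab (hs_diff.continuous.continuousOn)
      ⟨ha.le, hb.le⟩
    exact ⟨z, hz⟩
  set Qlo : ℝ := Lmin + τ * zβ with hQlo_def
  set Qhi : ℝ := Lmax + τ * zβ with hQhi_def
  set lo : ℝ := (Qlo - Lmax) / τ with hlo_def
  set hi : ℝ := (Qhi - Lmin) / τ with hhi_def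
  have hlohi : lo ≤ hi := by
    apply div_le_div_of_nonneg_right ?_ hτ.le
    simp only [hQlo_def, hQhi_def]; linarith
  -- minimum of the derivative on the compact window
  obtain ⟨z0, hz0I, hz0min⟩ :=
    isCompact_Icc.exists_isMinOn (Set.nonempty_Icc.mpr hlohi)
      ((hs_diff.continuous_deriv le_rfl).continuousOn)
  set c : ℝ := deriv s z0 with hc_def
  have hc : 0 < c := hs_deriv_pos z0
  have hsderiv : ∀ z : ℝ, HasDerivAt s (deriv s z) z := fun z =>
    ((hs_diff.differentiable one_ne_zero) z).hasDerivAt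
  -- mean value estimate
  have hmvt : ∀ a b : ℝ, a ∈ Set.Icc lo hi → b ∈ Set.Icc lo hi → a ≤ b →
      c * (b - a) ≤ s b - s a := by
    intro a b ha hb hab
    rcases eq_or_lt_of_le hab with rfl | hlt
    · simp
    obtain ⟨ξ, hξ, hξeq⟩ := exists_hasDerivAt_eq_slope s (deriv s) hlt
        (hs_diff.continuous.continuousOn) (fun z _ => hsderiv z)
    have hξI : ξ ∈ Set.Icc lo hi := ⟨le_trans ha.1 hξ.1.le, le_trans hξ.2.le hb.2⟩
    have hcle : c ≤ (s b - s a) / (b - a) := hξeq ▸ (isMinOn_iff.mp hz0min ξ hξI)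
    rw [le_div_iff₀ (by linarith)] at hcle
    linarith
  -- membership of the quantile in the compact box
  have hQmem : ∀ (x : Fin N → EuclideanSpace ℝ (Fin d)) (Q : ℝ),
      (∑ i, s ((Q - L (x i)) / τ)) = N * β → Q ∈ Set.Icc Qlo Qhi := by
    intro x Q hQ
    have hne : (Finset.univ : Finset (Fin N)).Nonempty :=
      Finset.univ_nonempty_iff.mpr (Fin.pos_iff_nonempty.mp hN)
    constructor
    · by_contra h
      push_neg at h
      have hlt : ∀ i : Fin N, s ((Q - L (x i)) / τ) < β := by
        intro i
        have h1 := (hLbd (x i)).1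
        have harg : (Q - L (x i)) / τ < zβ := by
          rw [div_lt_iff₀ hτ]
          simp only [hQlo_def] at h
          nlinarith
        calc s ((Q - L (x i)) / τ) < s zβ := hs_mono harg
          _ = β := hzβ
      have hsum : (∑ i, s ((Q - L (x i)) / τ)) < ∑ _i : Fin N, β :=
        Finset.sum_lt_sum_of_nonempty hne (fun i _ => hlt i)
      rw [Finset.sum_const, Finset.card_univ, Fintype.card_fin, nsmul_eq_mul] at hsum
      linarith [hQ ▸ hsum]
    · by_contra h
      push_neg at h
      have hlt : ∀ i : Fin N, β < s ((Q - L (x i)) / τ) := by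
        intro i
        have h1 := (hLbd (x i)).2
        have harg : zβ < (Q - L (x i)) / τ := by
          rw [lt_div_iff₀ hτ]
          simp only [hQhi_def] at h
          nlinarith
        calc β = s zβ := hzβ.symm
          _ < s ((Q - L (x i)) / τ) := hs_mono harg
      have hsum : (∑ _i : Fin N, β) < ∑ i, s ((Q - L (x i)) / τ) :=
        Finset.sum_lt_sum_of_nonempty hne (fun i _ => hlt i)
      rw [Finset.sum_const, Finset.card_univ, Fintype.card_fin, nsmul_eq_mul] at hsum
      linarith [hQ ▸ hsum]
  -- arguments stay in the compact window
  have hargmem : ∀ (u : EuclideanSpace ℝ (Fin d)) (Q : ℝ), Q ∈ Set.Icc Qlo Qhi →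
      (Q - L u) / τ ∈ Set.Icc lo hi := by
    intro u Q hQ
    have h1 := (hLbd u).1
    have h2 := (hLbd u).2
    constructor
    · apply div_le_div_of_nonneg_right ?_ hτ.le
      have := hQ.1; linarith
    · apply div_le_div_of_nonneg_right ?_ hτ.le
      have := hQ.2; linarith
  -- constants
  set LL' : ℝ := max LL 0 with hLL'_def
  set LG' : ℝ := max LG 0 with hLG'_def
  have hLL'0 : 0 ≤ LL' := le_max_right _ _
  have hLG'0 : 0 ≤ LG' := le_max_right _ _
  have hLlip' : ∀ u v, |L u - L v| ≤ LL' * ‖u - v‖ := fun u v =>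
    (hLlip u v).trans (mul_le_mul_of_nonneg_right (le_max_left _ _) (norm_nonneg _))
  have hGlip' : ∀ u v, |G u - G v| ≤ LG' * ‖u - v‖ := fun u v =>
    (hGlip u v).trans (mul_le_mul_of_nonneg_right (le_max_left _ _) (norm_nonneg _))
  have hLs0 : 0 < Ls := by
    have h := hLs 1 0
    have h1 : 0 < s 1 - s 0 := sub_pos.mpr (hs_mono one_pos)
    rw [abs_of_pos h1] at h
    simpa using lt_of_lt_of_le h1 h
  set whi : ℝ := Real.exp (-α * Gmin) with hwhi_def
  have hwhi : 0 < whi := Real.exp_pos _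
  set wlo : ℝ := Real.exp (-α * Gmax) * s lo with hwlo_def
  have hwlo : 0 < wlo := mul_pos (Real.exp_pos _) (hs_pos lo)
  set w : EuclideanSpace ℝ (Fin d) → ℝ → ℝ :=
    fun u Q => Real.exp (-α * G u) * s ((Q - L u) / τ) with hw_def
  have hexp_le : ∀ u : EuclideanSpace ℝ (Fin d), Real.exp (-α * G u) ≤ whi := by
    intro u
    exact Real.exp_le_exp.2 (by nlinarith [(hGbd u).1])
  have hwb : ∀ (u : EuclideanSpace ℝ (Fin d)) (Q : ℝ), Q ∈ Set.Icc Qlo Qhi →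
      wlo ≤ w u Q ∧ w u Q ≤ whi := by
    intro u Q hQ
    constructor
    · apply mul_le_mul (Real.exp_le_exp.2 (by nlinarith [(hGbd u).2]))
        (hs_mono.monotone (hargmem u Q hQ).1) (hs_pos lo).le (Real.exp_pos _).le
    · calc w u Q ≤ Real.exp (-α * G u) * 1 :=
          mul_le_mul_of_nonneg_left (hs_lt1 _).le (Real.exp_pos _).le
        _ = Real.exp (-α * G u) := mul_one _
        _ ≤ whi := hexp_le u
  set Kw : ℝ := whi * (α * LG' + Ls * (LL' + 1) / τ) with hKw_def
  have hKw : 0 < Kw := by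
    apply mul_pos hwhi
    have : 0 < Ls * (LL' + 1) / τ := by positivity
    nlinarith [mul_nonneg hα.le hLG'0]
  -- Lipschitz estimate for the weights
  have hwlip : ∀ (u v : EuclideanSpace ℝ (Fin d)) (Qu Qv : ℝ),
      |w u Qu - w v Qv| ≤ Kw * (‖u - v‖ + |Qu - Qv|) := by
    intro u v Qu Qv
    have hsplit : w u Qu - w v Qv =
        (Real.exp (-α * G u) - Real.exp (-α * G v)) * s ((Qu - L u) / τ)
        + Real.exp (-α * G v) * (s ((Qu - L u) / τ) - s ((Qv - L v) / τ)) := by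
      simp only [hw_def]; ring
    have hexpdiff : |Real.exp (-α * G u) - Real.exp (-α * G v)| ≤ whi * (α * (LG' * ‖u - v‖)) := by
      refine (exp_lip' (M := -α * Gmin) (by nlinarith [(hGbd u).1]) (by nlinarith [(hGbd v).1])).trans ?_
      rw [show -α * G u - -α * G v = -(α * (G u - G v)) by ring, abs_neg, abs_mul,
        abs_of_pos hα]
      exact mul_le_mul_of_nonneg_left (mul_le_mul_of_nonneg_left (hGlip' u v) hα.le) hwhi.le
    have hsdiff : |s ((Qu - L u) / τ) - s ((Qv - L v) / τ)| ≤
        Ls / τ * (|Qu - Qv| + LL' * ‖u - v‖) := by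
      refine (hLs _ _).trans ?_
      have harg : (Qu - L u) / τ - (Qv - L v) / τ = (Qu - Qv + (L v - L u)) / τ := by
        field_simp; ring
      have hnum : |Qu - Qv + (L v - L u)| ≤ |Qu - Qv| + LL' * ‖u - v‖ := by
        refine (abs_add_le _ _).trans ?_
        have h := hLlip' v u
        rw [norm_sub_rev v u] at h
        linarith
      calc Ls * |(Qu - L u) / τ - (Qv - L v) / τ|
          = Ls * (|Qu - Qv + (L v - L u)| / τ) := by rw [harg, abs_div, abs_of_pos hτ]
        _ ≤ Ls * ((|Qu - Qv| + LL' * ‖u - v‖) / τ) :=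
            mul_le_mul_of_nonneg_left (div_le_div_of_nonneg_right hnum hτ.le) hLs0.le
        _ = Ls / τ * (|Qu - Qv| + LL' * ‖u - v‖) := by ring
    calc |w u Qu - w v Qv| ≤
        |Real.exp (-α * G u) - Real.exp (-α * G v)| * |s ((Qu - L u) / τ)|
        + |Real.exp (-α * G v)| * |s ((Qu - L u) / τ) - s ((Qv - L v) / τ)| := by
          rw [hsplit]; refine (abs_add_le _ _).trans ?_; rw [abs_mul, abs_mul]
      _ ≤ whi * (α * (LG' * ‖u - v‖)) * 1 + whi * (Ls / τ * (|Qu - Qv| + LL' * ‖u - v‖)) := by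
          apply add_le_add
          · apply mul_le_mul hexpdiff ?_ (abs_nonneg _) (by positivity)
            rw [abs_of_pos (hs_pos _)]
            exact (hs_lt1 _).le
          · apply mul_le_mul ?_ hsdiff (abs_nonneg _) hwhi.le
            rw [abs_of_pos (Real.exp_pos _)]
            exact hexp_le v
      _ ≤ Kw * (‖u - v‖ + |Qu - Qv|) := by
          simp only [hKw_def]
          have h1 : (0:ℝ) ≤ ‖u - v‖ := norm_nonneg _
          have h2 : (0:ℝ) ≤ |Qu - Qv| := abs_nonneg _
          have h3 : (0:ℝ) ≤ Ls / τ := by positivity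
          have hexpand : whi * (α * LG' + Ls * (LL' + 1) / τ) * (‖u - v‖ + |Qu - Qv|)
              = whi * (α * (LG' * ‖u - v‖)) * 1
                + whi * (Ls / τ * (|Qu - Qv| + LL' * ‖u - v‖))
                + whi * (α * LG') * |Qu - Qv|
                + whi * (Ls / τ) * (‖u - v‖ + LL' * |Qu - Qv|) := by ring
          have t1 : 0 ≤ whi * (α * LG') * |Qu - Qv| :=
            mul_nonneg (mul_nonneg hwhi.le (mul_nonneg hα.le hLG'0)) h2
          have t2 : 0 ≤ whi * (Ls / τ) * (‖u - v‖ + LL' * |Qu - Qv|) :=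
            mul_nonneg (mul_nonneg hwhi.le h3) (add_nonneg h1 (mul_nonneg hLL'0 h2))
          linarith [hexpand]
  -- Lipschitz bound on the quantile
  have hQdiff : ∀ (x y : Fin N → EuclideanSpace ℝ (Fin d)) (Qx Qy : ℝ),
      (∑ i, s ((Qx - L (x i)) / τ)) = N * β →
      (∑ i, s ((Qy - L (y i)) / τ)) = N * β →
      Qx ≤ Qy →
      (N : ℝ) * c * (Qy - Qx) ≤ Ls * LL' * ∑ i, ‖x i - y i‖ := by
    intro x y Qx Qy hx hy hle
    have hQxb := hQmem x Qx hx
    have hQyb := hQmem y Qy hy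
    have h1 : ∀ i : Fin N,
        c * ((Qy - Qx) / τ) ≤ s ((Qy - L (y i)) / τ) - s ((Qx - L (y i)) / τ) := by
      intro i
      have hm := hmvt ((Qx - L (y i)) / τ) ((Qy - L (y i)) / τ)
        (hargmem (y i) Qx hQxb) (hargmem (y i) Qy hQyb)
        (div_le_div_of_nonneg_right (by linarith) hτ.le)
      have harg : (Qy - L (y i)) / τ - (Qx - L (y i)) / τ = (Qy - Qx) / τ := by ring
      rw [harg] at hm
      exact hm
    have hsum1 : (N : ℝ) * (c * ((Qy - Qx) / τ)) ≤
        ∑ i, (s ((Qy - L (y i)) / τ) - s ((Qx - L (y i)) / τ)) := by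
      calc (N : ℝ) * (c * ((Qy - Qx) / τ)) = ∑ _i : Fin N, c * ((Qy - Qx) / τ) := by
            rw [Finset.sum_const, Finset.card_univ, Fintype.card_fin, nsmul_eq_mul]
        _ ≤ _ := Finset.sum_le_sum fun i _ => h1 i
    have hsum2 : ∑ i, (s ((Qy - L (y i)) / τ) - s ((Qx - L (y i)) / τ))
        = ∑ i, (s ((Qx - L (x i)) / τ) - s ((Qx - L (y i)) / τ)) := by
      rw [Finset.sum_sub_distrib, Finset.sum_sub_distrib, hx, hy]
    have hsum3 : ∑ i, (s ((Qx - L (x i)) / τ) - s ((Qx - L (y i)) / τ))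
        ≤ ∑ i, Ls * LL' / τ * ‖x i - y i‖ := by
      refine Finset.sum_le_sum fun i _ => ?_
      have h := (le_abs_self _).trans (hLs ((Qx - L (x i)) / τ) ((Qx - L (y i)) / τ))
      have harg : (Qx - L (x i)) / τ - (Qx - L (y i)) / τ = (L (y i) - L (x i)) / τ := by
        ring
      rw [harg, abs_div, abs_of_pos hτ] at h
      have h2 := hLlip' (y i) (x i)
      rw [norm_sub_rev (y i) (x i)] at h2
      calc s ((Qx - L (x i)) / τ) - s ((Qx - L (y i)) / τ)
          ≤ Ls * (|L (y i) - L (x i)| / τ) := h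
        _ ≤ Ls * ((LL' * ‖x i - y i‖) / τ) :=
            mul_le_mul_of_nonneg_left (div_le_div_of_nonneg_right h2 hτ.le) hLs0.le
        _ = Ls * LL' / τ * ‖x i - y i‖ := by ring
    have hsum4 : ∑ i, Ls * LL' / τ * ‖x i - y i‖ = Ls * LL' / τ * ∑ i, ‖x i - y i‖ :=
      (Finset.mul_sum _ _ _).symm
    have hfin : (N : ℝ) * (c * ((Qy - Qx) / τ)) ≤ Ls * LL' / τ * ∑ i, ‖x i - y i‖ := by
      linarith [hsum1, hsum2, hsum3, hsum4]
    have hmul := mul_le_mul_of_nonneg_left hfin hτ.le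
    calc (N:ℝ) * c * (Qy - Qx) = τ * ((N:ℝ) * (c * ((Qy - Qx) / τ))) := by
          field_simp
      _ ≤ τ * (Ls * LL' / τ * ∑ i, ‖x i - y i‖) := hmul
      _ = Ls * LL' * ∑ i, ‖x i - y i‖ := by field_simp
  -- the constant
  have hLLc : (0:ℝ) ≤ Ls * LL' / c := div_nonneg (mul_nonneg hLs0.le hLL'0) hc.le
  set C0 : ℝ := wlo⁻¹ * (whi + Kw * R + Kw * R * (Ls * LL' / c))
      + Kw * (1 + Ls * LL' / c) * wlo⁻¹ * (whi * R / wlo) with hC0_def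
  have hwloinv : (0:ℝ) ≤ wlo⁻¹ := (inv_nonneg).2 hwlo.le
  have hwRwlo : (0:ℝ) ≤ whi * R / wlo := div_nonneg (mul_nonneg hwhi.le hR.le) hwlo.le
  have hC0nn : 0 ≤ C0 := by
    apply add_nonneg
    · exact mul_nonneg hwloinv (by positivity)
    · exact mul_nonneg (mul_nonneg (mul_nonneg hKw.le (by linarith)) hwloinv) hwRwlo
  refine ⟨C0 * Real.sqrt N + 1, ?_, ?_⟩
  · have : 0 ≤ C0 * Real.sqrt N := mul_nonneg hC0nn (Real.sqrt_nonneg _)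
    linarith
  intro x y Qx Qy hxR hyR hQx' hQy'
  have hx : (∑ i, s ((Qx - L (x i)) / τ)) = N * β := by
    field_simp at hQx'
    linarith
  have hy : (∑ i, s ((Qy - L (y i)) / τ)) = N * β := by
    field_simp at hQy'
    linarith
  have hQxb := hQmem x Qx hx
  have hQyb := hQmem y Qy hy
  -- pointwise norm bounds
  have hxiR : ∀ i, ‖x i‖ ≤ R := by
    intro i
    have h1 : ‖x i‖ ^ 2 ≤ ∑ j, ‖x j‖ ^ 2 :=
      Finset.single_le_sum (f := fun j => ‖x j‖ ^ 2) (fun j _ => sq_nonneg _)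
        (Finset.mem_univ i)
    calc ‖x i‖ = Real.sqrt (‖x i‖ ^ 2) := (Real.sqrt_sq (norm_nonneg _)).symm
      _ ≤ Real.sqrt (∑ j, ‖x j‖ ^ 2) := Real.sqrt_le_sqrt h1
      _ ≤ R := hxR
  have hyiR : ∀ i, ‖y i‖ ≤ R := by
    intro i
    have h1 : ‖y i‖ ^ 2 ≤ ∑ j, ‖y j‖ ^ 2 :=
      Finset.single_le_sum (f := fun j => ‖y j‖ ^ 2) (fun j _ => sq_nonneg _)
        (Finset.mem_univ i)
    calc ‖y i‖ = Real.sqrt (‖y i‖ ^ 2) := (Real.sqrt_sq (norm_nonneg _)).symm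
      _ ≤ Real.sqrt (∑ j, ‖y j‖ ^ 2) := Real.sqrt_le_sqrt h1
      _ ≤ R := hyR
  set D : ℝ := ∑ i, ‖x i - y i‖ with hD_def
  have hD0 : 0 ≤ D := Finset.sum_nonneg fun i _ => norm_nonneg _
  set S : ℝ := Real.sqrt (∑ i, ‖x i - y i‖ ^ 2) with hS_def
  have hS0 : 0 ≤ S := Real.sqrt_nonneg _
  have hDS : D ≤ Real.sqrt N * S := by
    have h := sq_sum_le_card_mul_sum_sq
      (s := (Finset.univ : Finset (Fin N))) (f := fun i => ‖x i - y i‖)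
    have h2 : D ≤ Real.sqrt ((N:ℝ) * ∑ i, ‖x i - y i‖ ^ 2) := by
      rw [← Real.sqrt_sq hD0]
      apply Real.sqrt_le_sqrt
      simpa [hD_def] using h
    rw [Real.sqrt_mul (by positivity)] at h2
    exact h2
  -- sums of weights
  set Bx : ℝ := ∑ i, Real.exp (-α * G (x i)) * s ((Qx - L (x i)) / τ) with hBx_def
  set By : ℝ := ∑ i, Real.exp (-α * G (y i)) * s ((Qy - L (y i)) / τ) with hBy_def
  set Ax : EuclideanSpace ℝ (Fin d) :=
    ∑ i, (Real.exp (-α * G (x i)) * s ((Qx - L (x i)) / τ)) • x i with hAx_def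
  set Ay : EuclideanSpace ℝ (Fin d) :=
    ∑ i, (Real.exp (-α * G (y i)) * s ((Qy - L (y i)) / τ)) • y i with hAy_def
  have hwxb : ∀ i, wlo ≤ Real.exp (-α * G (x i)) * s ((Qx - L (x i)) / τ) ∧
      Real.exp (-α * G (x i)) * s ((Qx - L (x i)) / τ) ≤ whi := fun i => hwb (x i) Qx hQxb
  have hwyb : ∀ i, wlo ≤ Real.exp (-α * G (y i)) * s ((Qy - L (y i)) / τ) ∧
      Real.exp (-α * G (y i)) * s ((Qy - L (y i)) / τ) ≤ whi := fun i => hwb (y i) Qy hQyb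
  have hwd : ∀ i, |Real.exp (-α * G (x i)) * s ((Qx - L (x i)) / τ)
      - Real.exp (-α * G (y i)) * s ((Qy - L (y i)) / τ)|
      ≤ Kw * (‖x i - y i‖ + |Qx - Qy|) := fun i => hwlip (x i) (y i) Qx Qy
  have hBxlo : (N : ℝ) * wlo ≤ Bx := by
    calc (N:ℝ) * wlo = ∑ _i : Fin N, wlo := by
          rw [Finset.sum_const, Finset.card_univ, Fintype.card_fin, nsmul_eq_mul]
      _ ≤ Bx := Finset.sum_le_sum fun i _ => (hwxb i).1
  have hBylo : (N : ℝ) * wlo ≤ By := by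
    calc (N:ℝ) * wlo = ∑ _i : Fin N, wlo := by
          rw [Finset.sum_const, Finset.card_univ, Fintype.card_fin, nsmul_eq_mul]
      _ ≤ By := Finset.sum_le_sum fun i _ => (hwyb i).1
  have hBx0 : 0 < Bx := lt_of_lt_of_le (mul_pos hNR hwlo) hBxlo
  have hBy0 : 0 < By := lt_of_lt_of_le (mul_pos hNR hwlo) hBylo
  have hwloBx : wlo ≤ Bx := by
    refine le_trans ?_ hBxlo
    calc wlo = 1 * wlo := (one_mul _).symm
      _ ≤ (N:ℝ) * wlo := mul_le_mul_of_nonneg_right (Nat.one_le_cast.mpr hN) hwlo.le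
  have hAyn : ‖Ay‖ ≤ whi * ((N:ℝ) * R) := by
    calc ‖Ay‖ ≤ ∑ i, ‖(Real.exp (-α * G (y i)) * s ((Qy - L (y i)) / τ)) • y i‖ :=
        norm_sum_le _ _
      _ ≤ ∑ _i : Fin N, whi * R := by
          refine Finset.sum_le_sum fun i _ => ?_
          rw [norm_smul, Real.norm_eq_abs,
            abs_of_pos (mul_pos (Real.exp_pos _) (hs_pos _))]
          exact mul_le_mul (hwyb i).2 (hyiR i) (norm_nonneg _) hwhi.le
      _ = whi * ((N:ℝ) * R) := by
          rw [Finset.sum_const, Finset.card_univ, Fintype.card_fin, nsmul_eq_mul]; ring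
  -- difference of numerators
  have hAdiff : ‖Ax - Ay‖ ≤ (whi + Kw * R) * D + (N:ℝ) * (Kw * R * |Qx - Qy|) := by
    have hsub : Ax - Ay = ∑ i, ((Real.exp (-α * G (x i)) * s ((Qx - L (x i)) / τ)) • x i
        - (Real.exp (-α * G (y i)) * s ((Qy - L (y i)) / τ)) • y i) :=
      (Finset.sum_sub_distrib _ _).symm
    rw [hsub]
    refine (norm_sum_le _ _).trans ?_
    have hterm : ∀ i : Fin N,
        ‖(Real.exp (-α * G (x i)) * s ((Qx - L (x i)) / τ)) • x i
          - (Real.exp (-α * G (y i)) * s ((Qy - L (y i)) / τ)) • y i‖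
        ≤ (whi + Kw * R) * ‖x i - y i‖ + Kw * R * |Qx - Qy| := by
      intro i
      set a : ℝ := Real.exp (-α * G (x i)) * s ((Qx - L (x i)) / τ) with ha_def
      set b : ℝ := Real.exp (-α * G (y i)) * s ((Qy - L (y i)) / τ) with hb_def
      have hsp : a • x i - b • y i = a • (x i - y i) + (a - b) • y i := by
        rw [smul_sub, sub_smul]; abel
      calc ‖a • x i - b • y i‖ ≤ ‖a • (x i - y i)‖ + ‖(a - b) • y i‖ := by
            rw [hsp]; exact norm_add_le _ _
        _ = |a| * ‖x i - y i‖ + |a - b| * ‖y i‖ := by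
            rw [norm_smul, norm_smul, Real.norm_eq_abs, Real.norm_eq_abs]
        _ ≤ whi * ‖x i - y i‖ + (Kw * (‖x i - y i‖ + |Qx - Qy|)) * R := by
            apply add_le_add
            · apply mul_le_mul ?_ le_rfl (norm_nonneg _) hwhi.le
              rw [abs_of_pos (mul_pos (Real.exp_pos _) (hs_pos _))]
              exact (hwxb i).2
            · exact mul_le_mul (hwd i) (hyiR i) (norm_nonneg _)
                (mul_nonneg hKw.le (add_nonneg (norm_nonneg _) (abs_nonneg _)))
        _ = (whi + Kw * R) * ‖x i - y i‖ + Kw * R * |Qx - Qy| := by ring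
    calc (∑ i, ‖(Real.exp (-α * G (x i)) * s ((Qx - L (x i)) / τ)) • x i
          - (Real.exp (-α * G (y i)) * s ((Qy - L (y i)) / τ)) • y i‖)
        ≤ ∑ i, ((whi + Kw * R) * ‖x i - y i‖ + Kw * R * |Qx - Qy|) :=
          Finset.sum_le_sum fun i _ => hterm i
      _ = (whi + Kw * R) * D + (N:ℝ) * (Kw * R * |Qx - Qy|) := by
          rw [Finset.sum_add_distrib, ← Finset.mul_sum, Finset.sum_const,
            Finset.card_univ, Fintype.card_fin, nsmul_eq_mul]
  -- difference of denominators
  have hBdiff : |Bx - By| ≤ Kw * D + (N:ℝ) * (Kw * |Qx - Qy|) := by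
    have hsub : Bx - By = ∑ i, (Real.exp (-α * G (x i)) * s ((Qx - L (x i)) / τ)
        - Real.exp (-α * G (y i)) * s ((Qy - L (y i)) / τ)) :=
      (Finset.sum_sub_distrib _ _).symm
    rw [hsub]
    refine (Finset.abs_sum_le_sum_abs _ _).trans ?_
    calc (∑ i, |Real.exp (-α * G (x i)) * s ((Qx - L (x i)) / τ)
          - Real.exp (-α * G (y i)) * s ((Qy - L (y i)) / τ)|)
        ≤ ∑ i, (Kw * ‖x i - y i‖ + Kw * |Qx - Qy|) :=
          Finset.sum_le_sum fun i _ => (hwd i).trans (le_of_eq (mul_add _ _ _))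
      _ = Kw * D + (N:ℝ) * (Kw * |Qx - Qy|) := by
          rw [Finset.sum_add_distrib, ← Finset.mul_sum, Finset.sum_const,
            Finset.card_univ, Fintype.card_fin, nsmul_eq_mul]
  -- quantile difference bound
  have hNdQ : (N:ℝ) * c * |Qx - Qy| ≤ Ls * LL' * D := by
    rcases le_total Qx Qy with h | h
    · have hq := hQdiff x y Qx Qy hx hy h
      rwa [abs_sub_comm, abs_of_nonneg (sub_nonneg.2 h)]
    · have hq := hQdiff y x Qy Qx hy hx h
      have he : (∑ i, ‖y i - x i‖) = D :=
        Finset.sum_congr rfl fun i _ => norm_sub_rev _ _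
      rw [he] at hq
      rwa [abs_of_nonneg (sub_nonneg.2 h)]
  have hNQle : (N:ℝ) * |Qx - Qy| ≤ Ls * LL' / c * D := by
    rw [div_mul_eq_mul_div, le_div_iff₀ hc]
    calc (N:ℝ) * |Qx - Qy| * c = (N:ℝ) * c * |Qx - Qy| := by ring
      _ ≤ Ls * LL' * D := hNdQ
  -- splitting of the consensus difference
  have hsplit : Bx⁻¹ • Ax - By⁻¹ • Ay = Bx⁻¹ • (Ax - Ay) + (Bx⁻¹ - By⁻¹) • Ay := by
    rw [smul_sub, sub_smul]; abel
  rw [hsplit]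
  have hnorm1 : ‖Bx⁻¹ • (Ax - Ay)‖ ≤ wlo⁻¹ * ‖Ax - Ay‖ := by
    rw [norm_smul, Real.norm_eq_abs, abs_of_pos (inv_pos.2 hBx0)]
    exact mul_le_mul_of_nonneg_right (inv_anti₀ hwlo hwloBx) (norm_nonneg _)
  have hmAy : By⁻¹ * ‖Ay‖ ≤ whi * R / wlo := by
    have h1 : By⁻¹ ≤ ((N:ℝ) * wlo)⁻¹ := inv_anti₀ (mul_pos hNR hwlo) hBylo
    calc By⁻¹ * ‖Ay‖ ≤ ((N:ℝ) * wlo)⁻¹ * (whi * ((N:ℝ) * R)) :=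
        mul_le_mul h1 hAyn (norm_nonneg _) (inv_nonneg.2 (mul_pos hNR hwlo).le)
      _ = whi * R / wlo := by
          field_simp
  have hnorm2 : ‖(Bx⁻¹ - By⁻¹) • Ay‖ ≤ |Bx - By| * wlo⁻¹ * (By⁻¹ * ‖Ay‖) := by
    rw [norm_smul, Real.norm_eq_abs]
    have hid : Bx⁻¹ - By⁻¹ = (By - Bx) * (Bx⁻¹ * By⁻¹) := by
      field_simp
    rw [hid, abs_mul, abs_mul, abs_of_pos (inv_pos.2 hBx0), abs_of_pos (inv_pos.2 hBy0),
      abs_sub_comm By Bx]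
    calc |Bx - By| * (Bx⁻¹ * By⁻¹) * ‖Ay‖ = |Bx - By| * Bx⁻¹ * (By⁻¹ * ‖Ay‖) := by ring
      _ ≤ |Bx - By| * wlo⁻¹ * (By⁻¹ * ‖Ay‖) := by
          apply mul_le_mul_of_nonneg_right ?_
            (mul_nonneg (inv_nonneg.2 hBy0.le) (norm_nonneg _))
          exact mul_le_mul_of_nonneg_left (inv_anti₀ hwlo hwloBx) (abs_nonneg _)
  have hPnn : (0:ℝ) ≤ Kw * D + (N:ℝ) * (Kw * |Qx - Qy|) :=
    add_nonneg (mul_nonneg hKw.le hD0)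
      (mul_nonneg hNR.le (mul_nonneg hKw.le (abs_nonneg _)))
  have hP1 : (whi + Kw * R) * D + (N:ℝ) * (Kw * R * |Qx - Qy|)
      ≤ (whi + Kw * R + Kw * R * (Ls * LL' / c)) * D := by
    have h1 : (N:ℝ) * (Kw * R * |Qx - Qy|) = (Kw * R) * ((N:ℝ) * |Qx - Qy|) := by ring
    have h2 := mul_le_mul_of_nonneg_left hNQle (mul_nonneg hKw.le hR.le)
    have h3 : (whi + Kw * R + Kw * R * (Ls * LL' / c)) * D
        = (whi + Kw * R) * D + Kw * R * (Ls * LL' / c * D) := by ring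
    linarith
  have hP2 : Kw * D + (N:ℝ) * (Kw * |Qx - Qy|) ≤ Kw * (1 + Ls * LL' / c) * D := by
    have h1 : (N:ℝ) * (Kw * |Qx - Qy|) = Kw * ((N:ℝ) * |Qx - Qy|) := by ring
    have h2 := mul_le_mul_of_nonneg_left hNQle hKw.le
    have h3 : Kw * (1 + Ls * LL' / c) * D = Kw * D + Kw * (Ls * LL' / c * D) := by ring
    linarith
  calc ‖Bx⁻¹ • (Ax - Ay) + (Bx⁻¹ - By⁻¹) • Ay‖
      ≤ wlo⁻¹ * ‖Ax - Ay‖ + |Bx - By| * wlo⁻¹ * (By⁻¹ * ‖Ay‖) :=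
        (norm_add_le _ _).trans (add_le_add hnorm1 hnorm2)
    _ ≤ wlo⁻¹ * ((whi + Kw * R + Kw * R * (Ls * LL' / c)) * D)
        + (Kw * (1 + Ls * LL' / c) * D) * wlo⁻¹ * (whi * R / wlo) := by
        apply add_le_add
        · exact mul_le_mul_of_nonneg_left (hAdiff.trans hP1) hwloinv
        · apply mul_le_mul ?_ hmAy
            (mul_nonneg (inv_nonneg.2 hBy0.le) (norm_nonneg _))
            (mul_nonneg (mul_nonneg (mul_nonneg hKw.le (by linarith)) hD0) hwloinv)
          exact mul_le_mul_of_nonneg_right (hBdiff.trans hP2) hwloinv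
    _ = C0 * D := by rw [hC0_def]; ring
    _ ≤ C0 * (Real.sqrt N * S) := mul_le_mul_of_nonneg_left hDS hC0nn
    _ = C0 * Real.sqrt N * S := by ring
    _ ≤ (C0 * Real.sqrt N + 1) * S := by
        apply mul_le_mul_of_nonneg_right ?_ hS0
        linarith
end

section
/- Under the standing hypotheses, for every N ∈ ℕ and every configuration x ∈ (ℝ^d)^N, the empirical consensus point satisfies ‖𝔪_N(x)‖₂ ≤ β^{−1/4} e^{α(G_max − G_min)} N^{−1/4} ‖x‖_{N,2}. -/
open MeasureTheory Filter Topology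

/-- Linear growth of the empirical consensus map:
`‖𝔪_N(x)‖ ≤ β^{-1/4} e^{α(G_max - G_min)} N^{-1/4} ‖x‖_{N,2}`. -/
theorem empirical_consensus_linear_growth
    (d : ℕ) (s : ℝ → ℝ)
    (hs_cont : Continuous s) (hs_mono : StrictMono s)
    (hs_pos : ∀ z, 0 < s z) (hs_lt1 : ∀ z, s z < 1)
    (hs_bot : Tendsto s atBot (𝓝 0)) (hs_top : Tendsto s atTop (𝓝 1))
    (β τ α : ℝ) (hβ : 0 < β ∧ β < 1) (hτ : 0 < τ) (hα : 0 < α)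
    (L G : EuclideanSpace ℝ (Fin d) → ℝ) (hL : Measurable L) (hG : Measurable G)
    (Gmin Gmax : ℝ) (hGbd : ∀ x, Gmin ≤ G x ∧ G x ≤ Gmax)
    (N : ℕ) (x : Fin N → EuclideanSpace ℝ (Fin d))
    (Qx : ℝ)
    (hQx : (1 / (N : ℝ)) * ∑ i, s ((Qx - L (x i)) / τ) = β) :
    ‖(∑ i, Real.exp (-α * G (x i)) * s ((Qx - L (x i)) / τ))⁻¹ •
        (∑ i, (Real.exp (-α * G (x i)) * s ((Qx - L (x i)) / τ)) • x i)‖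
      ≤ β ^ (-(1 : ℝ) / 4) * Real.exp (α * (Gmax - Gmin)) * (N : ℝ) ^ (-(1 : ℝ) / 4)
        * Real.sqrt (∑ i, ‖x i‖ ^ 2) := by
  obtain ⟨hβ0, hβ1⟩ := hβ
  set si : Fin N → ℝ := fun i => s ((Qx - L (x i)) / τ) with hsi
  set ei : Fin N → ℝ := fun i => Real.exp (-α * G (x i)) with hei
  -- N is positive
  have hN : 0 < N := by
    rcases Nat.eq_zero_or_pos N with h | h
    · subst h; simp at hQx; linarith
    · exact h
  have hNR : (0 : ℝ) < N := Nat.cast_pos.mpr hN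
  have hsum : ∑ i, si i = (N : ℝ) * β := by
    have h := hQx
    field_simp at h
    linarith
  have ht_pos : (0 : ℝ) < (N : ℝ) * β := mul_pos hNR hβ0
  -- basic positivity
  have hsi_pos : ∀ i, 0 < si i := fun i => hs_pos _
  have hsi_le1 : ∀ i, si i ≤ 1 := fun i => (hs_lt1 _).le
  have hei_pos : ∀ i, 0 < ei i := fun i => Real.exp_pos _
  have hei_lb : ∀ i, Real.exp (-α * Gmax) ≤ ei i := by
    intro i
    apply Real.exp_le_exp.mpr
    have := (hGbd (x i)).2
    nlinarith
  have hei_ub : ∀ i, ei i ≤ Real.exp (-α * Gmin) := by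
    intro i
    apply Real.exp_le_exp.mpr
    have := (hGbd (x i)).1
    nlinarith
  set S : ℝ := ∑ i, ei i * si i with hSdef
  have hS_lb : Real.exp (-α * Gmax) * ((N : ℝ) * β) ≤ S := by
    rw [← hsum, Finset.mul_sum]
    apply Finset.sum_le_sum
    intro i _
    exact mul_le_mul_of_nonneg_right (hei_lb i) (hsi_pos i).le
  have hS_pos : 0 < S :=
    lt_of_lt_of_le (mul_pos (Real.exp_pos _) ht_pos) hS_lb
  set R : ℝ := Real.sqrt (∑ i, ‖x i‖ ^ 2) with hR
  have hR_nonneg : 0 ≤ R := Real.sqrt_nonneg _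
  have hxi_le : ∀ i, ‖x i‖ ≤ R := by
    intro i
    exact Real.le_sqrt_of_sq_le
      (Finset.single_le_sum (f := fun j => ‖x j‖ ^ 2) (fun j _ => sq_nonneg _)
        (Finset.mem_univ i))
  -- norm of the weighted sum
  have hnorm_sum : ‖∑ i, (ei i * si i) • x i‖ ≤ ∑ i, (ei i * si i) * ‖x i‖ := by
    refine (norm_sum_le _ _).trans ?_
    apply Finset.sum_le_sum
    intro i _
    rw [norm_smul, Real.norm_eq_abs, abs_of_pos (mul_pos (hei_pos i) (hsi_pos i))]
  have hmain : ‖S⁻¹ • ∑ i, (ei i * si i) • x i‖ = S⁻¹ * ‖∑ i, (ei i * si i) • x i‖ := by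
    rw [norm_smul, Real.norm_eq_abs, abs_of_pos (inv_pos.mpr hS_pos)]
  -- Bound 1 : ‖m‖ ≤ R
  have hbound1 : ‖S⁻¹ • ∑ i, (ei i * si i) • x i‖ ≤ R := by
    rw [hmain, inv_mul_le_iff₀ hS_pos]
    refine hnorm_sum.trans ?_
    rw [hSdef, Finset.sum_mul]
    apply Finset.sum_le_sum
    intro i _
    exact mul_le_mul_of_nonneg_left (hxi_le i) (mul_pos (hei_pos i) (hsi_pos i)).le
  -- Cauchy-Schwarz
  have hCS : ∑ i, si i * ‖x i‖ ≤ Real.sqrt ((N : ℝ) * β) * R := by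
    refine (Real.sum_mul_le_sqrt_mul_sqrt _ _ _).trans ?_
    rw [hR]
    apply mul_le_mul_of_nonneg_right _ (Real.sqrt_nonneg _)
    apply Real.sqrt_le_sqrt
    rw [← hsum]
    apply Finset.sum_le_sum
    intro i _
    nlinarith [hsi_pos i, hsi_le1 i]
  have hsqrt_pos : 0 < Real.sqrt ((N : ℝ) * β) := Real.sqrt_pos.mpr ht_pos
  have hsq : Real.sqrt ((N : ℝ) * β) * Real.sqrt ((N : ℝ) * β) = (N : ℝ) * β :=
    Real.mul_self_sqrt ht_pos.le
  -- Bound 2 : ‖m‖ ≤ exp(α(Gmax-Gmin)) * (Nβ)^(-1/2) * R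
  have hhalf : ((N : ℝ) * β) ^ (-(1:ℝ)/2) = (Real.sqrt ((N : ℝ) * β))⁻¹ := by
    rw [show (-(1:ℝ)/2) = -(1/2) by norm_num, Real.rpow_neg ht_pos.le,
      ← Real.sqrt_eq_rpow]
  have hbound2 : ‖S⁻¹ • ∑ i, (ei i * si i) • x i‖
      ≤ Real.exp (α * (Gmax - Gmin)) * ((N : ℝ) * β) ^ (-(1:ℝ)/2) * R := by
    rw [hmain]
    have h1 : ‖∑ i, (ei i * si i) • x i‖
        ≤ Real.exp (-α * Gmin) * (Real.sqrt ((N : ℝ) * β) * R) := by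
      refine hnorm_sum.trans ?_
      calc ∑ i, (ei i * si i) * ‖x i‖
          ≤ ∑ i, Real.exp (-α * Gmin) * (si i * ‖x i‖) := by
            apply Finset.sum_le_sum
            intro i _
            rw [← mul_assoc]
            exact mul_le_mul_of_nonneg_right
              (mul_le_mul_of_nonneg_right (hei_ub i) (hsi_pos i).le) (norm_nonneg _)
        _ = Real.exp (-α * Gmin) * ∑ i, si i * ‖x i‖ := by rw [Finset.mul_sum]
        _ ≤ Real.exp (-α * Gmin) * (Real.sqrt ((N : ℝ) * β) * R) :=
            mul_le_mul_of_nonneg_left hCS (Real.exp_pos _).le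
    calc S⁻¹ * ‖∑ i, (ei i * si i) • x i‖
        ≤ (Real.exp (-α * Gmax) * ((N : ℝ) * β))⁻¹
            * (Real.exp (-α * Gmin) * (Real.sqrt ((N : ℝ) * β) * R)) := by
          apply mul_le_mul (inv_anti₀ (mul_pos (Real.exp_pos _) ht_pos) hS_lb)
            h1 (norm_nonneg _) (inv_pos.mpr (mul_pos (Real.exp_pos _) ht_pos)).le
      _ = Real.exp (α * (Gmax - Gmin)) * ((N : ℝ) * β) ^ (-(1:ℝ)/2) * R := by
          rw [hhalf]
          rw [show Real.exp (α * (Gmax - Gmin))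
              = (Real.exp (-α * Gmax))⁻¹ * Real.exp (-α * Gmin) by
            rw [← Real.exp_neg, ← Real.exp_add]; ring_nf]
          rw [← hsq]
          have hu : Real.sqrt ((N : ℝ) * β) ≠ 0 := ne_of_gt hsqrt_pos
          have he : Real.exp (-α * Gmax) ≠ 0 := Real.exp_ne_zero _
          field_simp
          rw [Real.sqrt_sq hsqrt_pos.le]

  -- combine
  have hGle : Gmin ≤ Gmax := le_trans (hGbd 0).1 (hGbd 0).2
  have hexp1 : 1 ≤ Real.exp (α * (Gmax - Gmin)) :=
    Real.one_le_exp (by nlinarith)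
  have htarget : β ^ (-(1:ℝ)/4) * Real.exp (α * (Gmax - Gmin)) * (N : ℝ) ^ (-(1:ℝ)/4) * R
      = Real.exp (α * (Gmax - Gmin)) * ((N : ℝ) * β) ^ (-(1:ℝ)/4) * R := by
    rw [Real.mul_rpow hNR.le hβ0.le]; ring
  rcases le_or_gt 1 ((N : ℝ) * β) with h1 | h1
  · refine hbound2.trans ?_
    rw [htarget]
    exact mul_le_mul_of_nonneg_right
      (mul_le_mul_of_nonneg_left
        (Real.rpow_le_rpow_of_exponent_le h1 (by norm_num)) (Real.exp_pos _).le)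
      hR_nonneg
  · refine hbound1.trans ?_
    rw [htarget]
    have h2 : 1 ≤ ((N : ℝ) * β) ^ (-(1:ℝ)/4) :=
      Real.one_le_rpow_of_pos_of_le_one_of_nonpos ht_pos h1.le (by norm_num)
    calc R = 1 * R := (one_mul R).symm
      _ ≤ Real.exp (α * (Gmax - Gmin)) * ((N : ℝ) * β) ^ (-(1:ℝ)/4) * R :=
        mul_le_mul_of_nonneg_right (one_le_mul_of_one_le_of_one_le hexp1 h2) hR_nonneg
end

section
/- Under the standing hypotheses, let ρ be a Borel probability measure on ℝ^d with finite second moment, let q = q_ρ and J = J[ρ], and suppose that for some r_G ∈ (0, R_G], r ∈ (0, r_G], u > 0, and δ_lev > 0 one has q + δ_lev ≤ L_min + min{L_∞, (η_L r_G)^{1/ν_L}}, u + G̃_r ≤ G_∞, and ρ(B_r(θ*)) > 0. Then ‖m(ρ) − θ*‖₂ ≤ r_G + η_G⁻¹ (u + G̃_r)^{ν_G} + [e^{−αu} / (c_in(q,r) ρ(B_r(θ*)))] · ∫ ‖θ − θ̃_G‖₂ dJ(θ) + [e^{α Δ_r} c_out(δ_lev) / (c_in(q,r) ρ(B_r(θ*)))]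 · ∫ ‖θ − θ̃_G‖₂ dρ(θ). -/
open MeasureTheory Filter Topology

set_option maxHeartbeats 1000000

/-- Soft quantitative quantiled Laplace principle without compact support (raw form). -/
theorem soft_laplace_principle_raw
    (d : ℕ) (s : ℝ → ℝ)
    (hs_cont : Continuous s) (hs_mono : StrictMono s)
    (hs_pos : ∀ z, 0 < s z) (hs_lt1 : ∀ z, s z < 1)
    (hs_bot : Tendsto s atBot (𝓝 0)) (hs_top : Tendsto s atTop (𝓝 1))
    (β τ α : ℝ) (hβ : 0 < β ∧ β < 1) (hτ : 0 < τ) (hα : 0 < α)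
    (L G : EuclideanSpace ℝ (Fin d) → ℝ)
    (LL : ℝ) (hLlip : ∀ x y, |L x - L y| ≤ LL * ‖x - y‖)
    (LG : ℝ) (hGlip : ∀ x y, |G x - G y| ≤ LG * ‖x - y‖)
    (Lmin Lmax : ℝ) (hLbd : ∀ x, Lmin ≤ L x ∧ L x ≤ Lmax)
    (Gmin Gmax : ℝ) (hGbd : ∀ x, Gmin ≤ G x ∧ G x ≤ Gmax)
    (Θ : Set (EuclideanSpace ℝ (Fin d)))
    (hΘ : Θ = {x | L x = Lmin}) (hΘne : Θ.Nonempty)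
    (θstar : EuclideanSpace ℝ (Fin d)) (hθstar : θstar ∈ Θ)
    (ηL νL Linf : ℝ) (hηL : 0 < ηL) (hνL : 0 < νL) (hLinf : 0 < Linf)
    (hHolder : ∀ x, L x - Lmin ≤ Linf →
      Metric.infDist x Θ ≤ ηL⁻¹ * (L x - Lmin) ^ νL)
    (RG : ℝ) (hRG : 0 < RG)
    (ηG νG Ginf : ℝ) (hηG : 0 < ηG) (hνG : 0 < νG) (hGinf : 0 < Ginf)
    (rG : ℝ) (hrG : 0 < rG ∧ rG ≤ RG)
    (θtilde : EuclideanSpace ℝ (Fin d))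
    (hθtilde_ball : ‖θtilde - θstar‖ < rG)
    (hθtilde_min : ∀ x, Metric.infDist x Θ ≤ rG → G θtilde ≤ G x)
    (hGgrowth : ∀ x, Metric.infDist x Θ ≤ rG → G x - G θtilde ≤ Ginf →
      ‖x - θtilde‖ ≤ ηG⁻¹ * (G x - G θtilde) ^ νG)
    (ρ : Measure (EuclideanSpace ℝ (Fin d))) [IsProbabilityMeasure ρ]
    (hmom2 : Integrable (fun x => ‖x‖ ^ 2) ρ)
    (q : ℝ) (hq : ∫ x, s ((q - L x) / τ) ∂ρ = β)
    (r u δlev : ℝ) (hr : 0 < r ∧ r ≤ rG) (hu : 0 < u) (hδ : 0 < δlev)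
    (Gtr Δr : ℝ)
    (hGtr : Gtr = sSup ((fun θ => G θ - G θtilde) '' Metric.ball θstar r))
    (hΔr : Δr = sSup (G '' Metric.ball θstar r) - Gmin)
    (hlev : q + δlev ≤ Lmin + min Linf ((ηL * rG) ^ ((1 : ℝ) / νL)))
    (hmass_cond : u + Gtr ≤ Ginf)
    (hmass : 0 < (ρ (Metric.ball θstar r)).toReal) :
    ‖(∫ x, Real.exp (-α * G x) * s ((q - L x) / τ) ∂ρ)⁻¹ •
        (∫ x, (Real.exp (-α * G x) * s ((q - L x) / τ)) • x ∂ρ) - θstar‖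
      ≤ rG + ηG⁻¹ * (u + Gtr) ^ νG
        + Real.exp (-α * u)
            / (s ((q - Lmin - LL * r) / τ) * (ρ (Metric.ball θstar r)).toReal)
          * ∫ θ, s ((q - L θ) / τ) * ‖θ - θtilde‖ ∂ρ
        + Real.exp (α * Δr) * s (-δlev / τ)
            / (s ((q - Lmin - LL * r) / τ) * (ρ (Metric.ball θstar r)).toReal)
          * ∫ θ, ‖θ - θtilde‖ ∂ρ := by
  classical
  have hsnn : ∀ z, (0:ℝ) ≤ s z := fun z => (hs_pos z).le
  have hθstarL : L θstar = Lmin := by rw [hΘ] at hθstar; exact hθstar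
  have hθstar_ball : θstar ∈ Metric.ball θstar r := Metric.mem_ball_self hr.1
  have hθstar_dist : Metric.infDist θstar Θ ≤ rG := by
    rw [Metric.infDist_zero_of_mem hθstar]; exact hrG.1.le
  have hGθt : G θtilde ≤ G θstar := hθtilde_min θstar hθstar_dist
  -- Gtr facts
  have hGc : Continuous G := by
    have : LipschitzWith ⟨|LG|, abs_nonneg _⟩ G := by
      apply LipschitzWith.of_dist_le_mul
      intro x y
      rw [Real.dist_eq, dist_eq_norm]
      exact le_trans (hGlip x y)
        (mul_le_mul_of_nonneg_right (le_abs_self _) (norm_nonneg _))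
    exact this.continuous
  have hGtr_bdd : BddAbove ((fun θ => G θ - G θtilde) '' Metric.ball θstar r) := by
    refine ⟨Gmax - G θtilde, ?_⟩
    rintro t ⟨θ, -, rfl⟩
    have := (hGbd θ).2
    dsimp only
    linarith
  have hGtr_nn : 0 ≤ Gtr := by
    have h1 : G θstar - G θtilde ≤ Gtr := by
      rw [hGtr]; exact le_csSup hGtr_bdd ⟨θstar, hθstar_ball, rfl⟩
    linarith only [h1, hGθt]
  have huG : 0 ≤ u + Gtr := by linarith only [hu.le, hGtr_nn]
  have hcin : 0 < s ((q - Lmin - LL * r) / τ) := hs_pos _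
  have hC2nn : 0 ≤ ηG⁻¹ * (u + Gtr) ^ νG :=
    mul_nonneg (inv_nonneg.2 hηG.le) (Real.rpow_nonneg huG _)
  have hI3nn : 0 ≤ ∫ θ, s ((q - L θ) / τ) * ‖θ - θtilde‖ ∂ρ :=
    integral_nonneg fun θ => mul_nonneg (hsnn _) (norm_nonneg _)
  have hI4nn : 0 ≤ ∫ θ, ‖θ - θtilde‖ ∂ρ :=
    integral_nonneg fun θ => norm_nonneg _
  have hden : 0 < s ((q - Lmin - LL * r) / τ) * (ρ (Metric.ball θstar r)).toReal :=
    mul_pos hcin hmass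
  have hT3nn : 0 ≤ Real.exp (-α * u)
      / (s ((q - Lmin - LL * r) / τ) * (ρ (Metric.ball θstar r)).toReal)
      * ∫ θ, s ((q - L θ) / τ) * ‖θ - θtilde‖ ∂ρ :=
    mul_nonneg (div_nonneg (Real.exp_pos _).le hden.le) hI3nn
  have hT4nn : 0 ≤ Real.exp (α * Δr) * s (-δlev / τ)
      / (s ((q - Lmin - LL * r) / τ) * (ρ (Metric.ball θstar r)).toReal)
      * ∫ θ, ‖θ - θtilde‖ ∂ρ :=
    mul_nonneg (div_nonneg (mul_nonneg (Real.exp_pos _).le (hsnn _)) hden.le) hI4nn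
  by_cases hLL : 0 ≤ LL
  swap
  · -- degenerate: the whole space is a single point
    push_neg at hLL
    have hsub : ∀ x y : EuclideanSpace ℝ (Fin d), x = y := by
      intro x y
      by_contra hxy
      have h1 : 0 < ‖x - y‖ := norm_sub_pos_iff.mpr hxy
      have h2 := hLlip x y
      have h3 : LL * ‖x - y‖ < 0 := mul_neg_of_neg_of_pos hLL h1
      linarith only [abs_nonneg (L x - L y), h2, h3]
    have h0 : ‖(∫ x, Real.exp (-α * G x) * s ((q - L x) / τ) ∂ρ)⁻¹ •
        (∫ x, (Real.exp (-α * G x) * s ((q - L x) / τ)) • x ∂ρ) - θstar‖ = 0 := by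
      rw [sub_eq_zero.mpr (hsub _ _), norm_zero]
    rw [h0]
    linarith only [hrG.1, hC2nn, hT3nn, hT4nn]
  -- main case
  -- notation
  set cin := s ((q - Lmin - LL * r) / τ) with hcin_def
  set mass := (ρ (Metric.ball θstar r)).toReal with hmass_def
  set w : EuclideanSpace ℝ (Fin d) → ℝ :=
    fun x => Real.exp (-α * G x) * s ((q - L x) / τ) with hw_def
  have hwpos : ∀ x, 0 < w x := fun x => mul_pos (Real.exp_pos _) (hs_pos _)
  have hLc : Continuous L := by
    have : LipschitzWith ⟨|LL|, abs_nonneg _⟩ L := by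
      apply LipschitzWith.of_dist_le_mul
      intro x y
      rw [Real.dist_eq, dist_eq_norm]
      exact le_trans (hLlip x y)
        (mul_le_mul_of_nonneg_right (le_abs_self _) (norm_nonneg _))
    exact this.continuous
  have hηc : Continuous fun x => s ((q - L x) / τ) :=
    hs_cont.comp ((continuous_const.sub hLc).div_const τ)
  have hwc : Continuous w :=
    (Real.continuous_exp.comp (continuous_const.mul hGc)).mul hηc
  have hw_le : ∀ x, w x ≤ Real.exp (-α * Gmin) := by
    intro x
    have h1 : Real.exp (-α * G x) ≤ Real.exp (-α * Gmin) :=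
      Real.exp_le_exp.mpr (mul_le_mul_of_nonpos_left (hGbd x).1 (neg_nonpos.mpr hα.le))
    calc w x ≤ Real.exp (-α * G x) * 1 := by
          exact mul_le_mul_of_nonneg_left (hs_lt1 _).le (Real.exp_pos _).le
      _ ≤ Real.exp (-α * Gmin) := by rw [mul_one]; exact h1
  -- integrability
  have hnorm_le : ∀ x : EuclideanSpace ℝ (Fin d), ‖x‖ ≤ 1 + ‖x‖ ^ 2 := by
    intro x; nlinarith [norm_nonneg x, sq_nonneg (‖x‖ - 1)]
  have int_norm : Integrable (fun x => ‖x‖) ρ := by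
    refine Integrable.mono' ((integrable_const (1:ℝ)).add hmom2)
      continuous_norm.aestronglyMeasurable (Eventually.of_forall fun x => ?_)
    rw [norm_norm]
    exact hnorm_le x
  have int_nt : Integrable (fun x => ‖x - θtilde‖) ρ := by
    refine Integrable.mono' (int_norm.add (integrable_const ‖θtilde‖))
      (continuous_norm.comp (continuous_id.sub continuous_const)).aestronglyMeasurable
      (Eventually.of_forall fun x => ?_)
    rw [norm_norm]
    exact norm_sub_le x θtilde
  have int_w : Integrable w ρ := by
    refine Integrable.mono' (integrable_const (Real.exp (-α * Gmin)))
      hwc.aestronglyMeasurable (Eventually.of_forall fun x => ?_)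
    rw [Real.norm_eq_abs, abs_of_nonneg (hwpos x).le]
    exact hw_le x
  have int_wx : Integrable (fun x => w x • x) ρ := by
    refine Integrable.mono' (int_norm.const_mul (Real.exp (-α * Gmin)))
      (hwc.smul continuous_id).aestronglyMeasurable (Eventually.of_forall fun x => ?_)
    rw [norm_smul, Real.norm_eq_abs, abs_of_nonneg (hwpos x).le]
    exact mul_le_mul_of_nonneg_right (hw_le x) (norm_nonneg _)
  have int_wnt : Integrable (fun x => w x * ‖x - θtilde‖) ρ := by
    refine Integrable.mono' (int_nt.const_mul (Real.exp (-α * Gmin)))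
      (hwc.mul (continuous_norm.comp (continuous_id.sub continuous_const))).aestronglyMeasurable
      (Eventually.of_forall fun x => ?_)
    rw [Real.norm_eq_abs, abs_of_nonneg (mul_nonneg (hwpos x).le (norm_nonneg _))]
    exact mul_le_mul_of_nonneg_right (hw_le x) (norm_nonneg _)
  have int_ηnt : Integrable (fun x => s ((q - L x) / τ) * ‖x - θtilde‖) ρ := by
    refine Integrable.mono' int_nt
      (hηc.mul (continuous_norm.comp (continuous_id.sub continuous_const))).aestronglyMeasurable
      (Eventually.of_forall fun x => ?_)
    rw [Real.norm_eq_abs, abs_of_nonneg (mul_nonneg (hsnn _) (norm_nonneg _))]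
    calc s ((q - L x) / τ) * ‖x - θtilde‖ ≤ 1 * ‖x - θtilde‖ :=
          mul_le_mul_of_nonneg_right (hs_lt1 _).le (norm_nonneg _)
      _ = ‖x - θtilde‖ := one_mul _
  -- lower bound on the normalizer B
  set B := ∫ x, w x ∂ρ with hB_def
  set cB := Real.exp (-α * (Gmin + Δr)) * cin with hcB_def
  have hG_sup : ∀ x ∈ Metric.ball θstar r, G x ≤ Gmin + Δr := by
    intro x hx
    have : G x ≤ sSup (G '' Metric.ball θstar r) := by
      apply le_csSup
      · exact ⟨Gmax, by rintro t ⟨θ, -, rfl⟩; exact (hGbd θ).2⟩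
      · exact ⟨x, hx, rfl⟩
    rw [hΔr]; linarith only [this]
  have hwball : ∀ x ∈ Metric.ball θstar r, cB ≤ w x := by
    intro x hx
    have hxd : ‖x - θstar‖ ≤ r := by
      rw [Metric.mem_ball, dist_eq_norm] at hx; exact hx.le
    have hLx : L x ≤ Lmin + LL * r := by
      have h1 : L x - L θstar ≤ |L x - L θstar| := le_abs_self _
      have h2 := hLlip x θstar
      have h3 : LL * ‖x - θstar‖ ≤ LL * r := mul_le_mul_of_nonneg_left hxd hLL
      rw [hθstarL] at h1 h2
      linarith only [h1, h2, h3]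
    have hη : cin ≤ s ((q - L x) / τ) := by
      rw [hcin_def]
      exact hs_mono.monotone
        (div_le_div_of_nonneg_right (by linarith only [hLx]) hτ.le)
    have hε : Real.exp (-α * (Gmin + Δr)) ≤ Real.exp (-α * G x) :=
      Real.exp_le_exp.mpr (mul_le_mul_of_nonpos_left (hG_sup x hx) (neg_nonpos.mpr hα.le))
    rw [hcB_def]
    exact mul_le_mul hε hη (hsnn _) (Real.exp_pos _).le
  have hB_lb : cB * mass ≤ B := by
    calc cB * mass ≤ ∫ x in Metric.ball θstar r, w x ∂ρ := by
          apply setIntegral_ge_of_const_le_real Metric.isOpen_ball.measurableSet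
            (measure_ne_top ρ _) hwball int_w.integrableOn
      _ ≤ B := setIntegral_le_integral int_w (Eventually.of_forall fun x => (hwpos x).le)
  have hcB : 0 < cB := mul_pos (Real.exp_pos _) hcin
  have hB : 0 < B := lt_of_lt_of_le (mul_pos hcB hmass) hB_lb
  -- the weighted-mean identity
  set A := ∫ x, w x • x ∂ρ with hA_def
  have hId : B⁻¹ • A - θtilde = B⁻¹ • ∫ x, w x • (x - θtilde) ∂ρ := by
    have h1 : ∫ x, w x • (x - θtilde) ∂ρ = A - B • θtilde := by
      have h2 : (fun x => w x • (x - θtilde)) = fun x => w x • x - w x • θtilde := by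
        funext x; rw [smul_sub]
      rw [h2, integral_sub int_wx (int_w.smul_const θtilde), integral_smul_const]
    rw [h1, smul_sub, smul_smul, inv_mul_cancel₀ hB.ne', one_smul]
  have hstep2 : ‖B⁻¹ • A - θtilde‖ ≤ B⁻¹ * ∫ x, w x * ‖x - θtilde‖ ∂ρ := by
    rw [hId, norm_smul, Real.norm_eq_abs, abs_of_pos (inv_pos.mpr hB)]
    apply mul_le_mul_of_nonneg_left ?_ (inv_pos.mpr hB).le
    calc ‖∫ x, w x • (x - θtilde) ∂ρ‖ ≤ ∫ x, ‖w x • (x - θtilde)‖ ∂ρ :=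
          norm_integral_le_integral_norm _
      _ = ∫ x, w x * ‖x - θtilde‖ ∂ρ := by
          congr 1; funext x
          rw [norm_smul, Real.norm_eq_abs, abs_of_nonneg (hwpos x).le]
  -- pointwise estimate
  set C2 := ηG⁻¹ * (u + Gtr) ^ νG with hC2_def
  set K3 := Real.exp (-α * (Gmin + Δr + u)) with hK3_def
  set K4 := Real.exp (-α * Gmin) * s (-δlev / τ) with hK4_def
  have hpt : ∀ x, w x * ‖x - θtilde‖
      ≤ C2 * w x + K3 * (s ((q - L x) / τ) * ‖x - θtilde‖) + K4 * ‖x - θtilde‖ := by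
    intro x
    have ht1 : 0 ≤ C2 * w x := mul_nonneg hC2nn (hwpos x).le
    have ht2 : 0 ≤ K3 * (s ((q - L x) / τ) * ‖x - θtilde‖) :=
      mul_nonneg (Real.exp_pos _).le (mul_nonneg (hsnn _) (norm_nonneg _))
    have ht3 : 0 ≤ K4 * ‖x - θtilde‖ :=
      mul_nonneg (mul_nonneg (Real.exp_pos _).le (hsnn _)) (norm_nonneg _)
    by_cases hx1 : L x ≤ q + δlev
    · -- inside level set: x is close to Θ
      have h0 : 0 ≤ L x - Lmin := by linarith only [(hLbd x).1]
      have h1 : L x - Lmin ≤ Linf := by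
        linarith only [hx1, hδ, hlev, min_le_left Linf ((ηL * rG) ^ ((1:ℝ) / νL))]
      have h2 : L x - Lmin ≤ (ηL * rG) ^ ((1:ℝ) / νL) := by
        linarith only [hx1, hδ, hlev, min_le_right Linf ((ηL * rG) ^ ((1:ℝ) / νL))]
      have hdist : Metric.infDist x Θ ≤ rG := by
        have h3 : (L x - Lmin) ^ νL ≤ ((ηL * rG) ^ ((1:ℝ) / νL)) ^ νL :=
          Real.rpow_le_rpow h0 h2 hνL.le
        have h4 : ((ηL * rG) ^ ((1:ℝ) / νL)) ^ νL = ηL * rG := by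
          have hpos : (0:ℝ) ≤ ηL * rG := mul_nonneg hηL.le hrG.1.le
          rw [← Real.rpow_mul hpos, one_div, inv_mul_cancel₀ hνL.ne', Real.rpow_one]
        calc Metric.infDist x Θ ≤ ηL⁻¹ * (L x - Lmin) ^ νL := hHolder x h1
          _ ≤ ηL⁻¹ * (ηL * rG) := by
              rw [← h4]; exact mul_le_mul_of_nonneg_left h3 (inv_nonneg.2 hηL.le)
          _ = rG := by field_simp
      have hGmin' : G θtilde ≤ G x := hθtilde_min x hdist
      by_cases hx2 : G x - G θtilde ≤ u + Gtr
      · have hxnear : ‖x - θtilde‖ ≤ C2 := by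
          calc ‖x - θtilde‖ ≤ ηG⁻¹ * (G x - G θtilde) ^ νG :=
                hGgrowth x hdist (le_trans hx2 hmass_cond)
            _ ≤ C2 := mul_le_mul_of_nonneg_left
                (Real.rpow_le_rpow (by linarith only [hGmin']) hx2 hνG.le)
                (inv_nonneg.2 hηG.le)
        have : w x * ‖x - θtilde‖ ≤ C2 * w x := by
          rw [mul_comm C2]
          exact mul_le_mul_of_nonneg_left hxnear (hwpos x).le
        linarith only [this, ht2, ht3]
      · -- far in G-value: exponential decay
        push_neg at hx2
        have hGx : Gmin + Δr + u ≤ G x := by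
          have hsuple : sSup (G '' Metric.ball θstar r) ≤ G θtilde + Gtr := by
            apply csSup_le (Set.Nonempty.image G ⟨θstar, hθstar_ball⟩)
            rintro t ⟨θ, hθ, rfl⟩
            have : G θ - G θtilde ≤ Gtr := by
              rw [hGtr]; exact le_csSup hGtr_bdd ⟨θ, hθ, rfl⟩
            linarith
          linarith only [hΔr, hsuple, hx2]
        have hε : Real.exp (-α * G x) ≤ K3 := by
          rw [hK3_def]
          exact Real.exp_le_exp.mpr
            (mul_le_mul_of_nonpos_left hGx (neg_nonpos.mpr hα.le))
        have : w x * ‖x - θtilde‖ ≤ K3 * (s ((q - L x) / τ) * ‖x - θtilde‖) := by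
          rw [hw_def]
          calc Real.exp (-α * G x) * s ((q - L x) / τ) * ‖x - θtilde‖
              = Real.exp (-α * G x) * (s ((q - L x) / τ) * ‖x - θtilde‖) := by ring
            _ ≤ K3 * (s ((q - L x) / τ) * ‖x - θtilde‖) :=
                mul_le_mul_of_nonneg_right hε (mul_nonneg (hsnn _) (norm_nonneg _))
        linarith only [this, ht1, ht3]
    · -- outside level set
      push_neg at hx1
      have hη : s ((q - L x) / τ) ≤ s (-δlev / τ) := by
        exact hs_mono.monotone
          (div_le_div_of_nonneg_right (by linarith only [hx1]) hτ.le)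
      have hε : Real.exp (-α * G x) ≤ Real.exp (-α * Gmin) :=
        Real.exp_le_exp.mpr (mul_le_mul_of_nonpos_left (hGbd x).1 (neg_nonpos.mpr hα.le))
      have : w x * ‖x - θtilde‖ ≤ K4 * ‖x - θtilde‖ := by
        apply mul_le_mul_of_nonneg_right ?_ (norm_nonneg _)
        rw [hw_def, hK4_def]
        exact mul_le_mul hε hη (hsnn _) (Real.exp_pos _).le
      linarith only [this, ht1, ht2]
  -- integrate the pointwise estimate
  set I3 := ∫ θ, s ((q - L θ) / τ) * ‖θ - θtilde‖ ∂ρ with hI3_def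
  set I4 := ∫ θ, ‖θ - θtilde‖ ∂ρ with hI4_def
  have intA : Integrable (fun x => C2 * w x) ρ := int_w.const_mul C2
  have intB : Integrable (fun x => K3 * (s ((q - L x) / τ) * ‖x - θtilde‖)) ρ :=
    int_ηnt.const_mul K3
  have intC : Integrable (fun x => K4 * ‖x - θtilde‖) ρ := int_nt.const_mul K4
  have intAB : Integrable
      (fun x => C2 * w x + K3 * (s ((q - L x) / τ) * ‖x - θtilde‖)) ρ := intA.add intB
  have hRint : Integrable (fun x => C2 * w x
      + K3 * (s ((q - L x) / τ) * ‖x - θtilde‖) + K4 * ‖x - θtilde‖) ρ := intAB.add intC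
  have hint : (∫ x, w x * ‖x - θtilde‖ ∂ρ) ≤ C2 * B + K3 * I3 + K4 * I4 := by
    calc (∫ x, w x * ‖x - θtilde‖ ∂ρ)
        ≤ ∫ x, (C2 * w x + K3 * (s ((q - L x) / τ) * ‖x - θtilde‖)
            + K4 * ‖x - θtilde‖) ∂ρ := integral_mono int_wnt hRint (fun x => hpt x)
      _ = C2 * B + K3 * I3 + K4 * I4 := by
          rw [integral_add intAB intC, integral_add intA intB,
            integral_const_mul, integral_const_mul, integral_const_mul,
            ← hB_def, ← hI3_def, ← hI4_def]
  -- combine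
  have hmain : ‖B⁻¹ • A - θtilde‖ ≤ C2 + (K3 / B) * I3 + (K4 / B) * I4 := by
    calc ‖B⁻¹ • A - θtilde‖ ≤ B⁻¹ * ∫ x, w x * ‖x - θtilde‖ ∂ρ := hstep2
      _ ≤ B⁻¹ * (C2 * B + K3 * I3 + K4 * I4) :=
          mul_le_mul_of_nonneg_left hint (inv_pos.mpr hB).le
      _ = C2 + (K3 / B) * I3 + (K4 / B) * I4 := by
          field_simp
  have hK3B : K3 / B ≤ Real.exp (-α * u) / (cin * mass) := by
    calc K3 / B ≤ K3 / (cB * mass) :=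
          div_le_div_of_nonneg_left (Real.exp_pos _).le (mul_pos hcB hmass) hB_lb
      _ = Real.exp (-α * u) / (cin * mass) := by
          rw [hK3_def, hcB_def]
          rw [show -α * (Gmin + Δr + u) = -α * u + -α * (Gmin + Δr) by ring, Real.exp_add]
          rw [div_eq_div_iff (by positivity) (by positivity)]
          ring
  have hK4B : K4 / B ≤ Real.exp (α * Δr) * s (-δlev / τ) / (cin * mass) := by
    calc K4 / B ≤ K4 / (cB * mass) :=
          div_le_div_of_nonneg_left
            (mul_nonneg (Real.exp_pos _).le (hsnn _)) (mul_pos hcB hmass) hB_lb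
      _ = Real.exp (α * Δr) * s (-δlev / τ) / (cin * mass) := by
          rw [hK4_def, hcB_def]
          rw [show -α * Gmin = α * Δr + -α * (Gmin + Δr) by ring, Real.exp_add]
          rw [div_eq_div_iff (by positivity) (by positivity)]
          ring
  -- final chain
  calc ‖B⁻¹ • A - θstar‖ ≤ ‖B⁻¹ • A - θtilde‖ + ‖θtilde - θstar‖ := by
        have := dist_triangle (B⁻¹ • A) θtilde θstar
        simpa [dist_eq_norm] using this
    _ ≤ (C2 + (K3 / B) * I3 + (K4 / B) * I4) + rG :=
        add_le_add hmain hθtilde_ball.le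
    _ ≤ rG + C2 + Real.exp (-α * u) / (cin * mass) * I3
        + Real.exp (α * Δr) * s (-δlev / τ) / (cin * mass) * I4 := by
        have h3 := mul_le_mul_of_nonneg_right hK3B hI3nn
        have h4 := mul_le_mul_of_nonneg_right hK4B hI4nn
        linarith only [h3, h4]
end

section
/- Under the standing hypotheses of the soft quantitative quantiled Laplace principle, with V_ρ = (1/2) ∫ ‖θ − θ*‖₂² dρ(θ), one has ‖m(ρ) − θ*‖₂ ≤ r_G + η_G⁻¹ (u + G̃_r)^{ν_G} + [e^{−αu} / (c_in(q,r) ρ(B_r(θ*)))] · (√(2V_ρ) + β r_G) + [e^{α Δ_r} c_out(δ_lev) / (c_in(q,r) ρ(B_r(θ*)))] · (√(2V_ρ) + r_G). -/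
open MeasureTheory Filter Topology

/-- Cauchy–Schwarz: on a probability measure, `∫ f ≤ √(∫ f²)` for nonnegative `f`. -/
lemma integral_le_sqrt_integral_sq {X : Type*} {mX : MeasurableSpace X}
    (μ : Measure X) [IsProbabilityMeasure μ] {f : X → ℝ}
    (hf : Integrable f μ) (hf2 : Integrable (fun x => f x ^ 2) μ)
    (hfnn : ∀ x, 0 ≤ f x) :
    ∫ x, f x ∂μ ≤ Real.sqrt (∫ x, f x ^ 2 ∂μ) := by
  set c : ℝ := ∫ x, f x ∂μ with hc
  have hcnn : 0 ≤ c := integral_nonneg hfnn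
  have h0 : 0 ≤ ∫ x, (f x - c) ^ 2 ∂μ := integral_nonneg fun x => sq_nonneg _
  have hexp : ∫ x, (f x - c) ^ 2 ∂μ = (∫ x, f x ^ 2 ∂μ) - c ^ 2 := by
    have h1 : ∀ x, (f x - c) ^ 2 = f x ^ 2 - 2 * c * f x + c ^ 2 := by intro x; ring
    simp_rw [h1]
    have ha : Integrable (fun x => f x ^ 2 - 2 * c * f x) μ := hf2.sub (hf.const_mul (2 * c))
    rw [integral_add ha (integrable_const _),
      integral_sub hf2 (hf.const_mul (2 * c)), integral_const_mul, integral_const]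
    simp only [measure_univ, probReal_univ, ENNReal.toReal_one, smul_eq_mul, one_mul, ← hc]
    ring
  have hsq : c ^ 2 ≤ ∫ x, f x ^ 2 ∂μ := by linarith [hexp ▸ h0]
  exact (Real.le_sqrt hcnn (le_trans (sq_nonneg c) hsq)).mpr hsq

set_option maxHeartbeats 2000000 in
/-- Soft quantitative quantiled Laplace principle, variance form
(with `V_ρ = (1/2) ∫ ‖θ - θ*‖² dρ`). -/
theorem soft_laplace_principle_variance
    (d : ℕ) (s : ℝ → ℝ)
    (hs_cont : Continuous s) (hs_mono : StrictMono s)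
    (hs_pos : ∀ z, 0 < s z) (hs_lt1 : ∀ z, s z < 1)
    (hs_bot : Tendsto s atBot (𝓝 0)) (hs_top : Tendsto s atTop (𝓝 1))
    (β τ α : ℝ) (hβ : 0 < β ∧ β < 1) (hτ : 0 < τ) (hα : 0 < α)
    (L G : EuclideanSpace ℝ (Fin d) → ℝ)
    (LL : ℝ) (hLlip : ∀ x y, |L x - L y| ≤ LL * ‖x - y‖)
    (LG : ℝ) (hGlip : ∀ x y, |G x - G y| ≤ LG * ‖x - y‖)
    (Lmin Lmax : ℝ) (hLbd : ∀ x, Lmin ≤ L x ∧ L x ≤ Lmax)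
    (Gmin Gmax : ℝ) (hGbd : ∀ x, Gmin ≤ G x ∧ G x ≤ Gmax)
    (Θ : Set (EuclideanSpace ℝ (Fin d)))
    (hΘ : Θ = {x | L x = Lmin}) (hΘne : Θ.Nonempty)
    (θstar : EuclideanSpace ℝ (Fin d)) (hθstar : θstar ∈ Θ)
    (ηL νL Linf : ℝ) (hηL : 0 < ηL) (hνL : 0 < νL) (hLinf : 0 < Linf)
    (hHolder : ∀ x, L x - Lmin ≤ Linf →
      Metric.infDist x Θ ≤ ηL⁻¹ * (L x - Lmin) ^ νL)
    (RG : ℝ) (hRG : 0 < RG)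
    (ηG νG Ginf : ℝ) (hηG : 0 < ηG) (hνG : 0 < νG) (hGinf : 0 < Ginf)
    (rG : ℝ) (hrG : 0 < rG ∧ rG ≤ RG)
    (θtilde : EuclideanSpace ℝ (Fin d))
    (hθtilde_ball : ‖θtilde - θstar‖ < rG)
    (hθtilde_min : ∀ x, Metric.infDist x Θ ≤ rG → G θtilde ≤ G x)
    (hGgrowth : ∀ x, Metric.infDist x Θ ≤ rG → G x - G θtilde ≤ Ginf →
      ‖x - θtilde‖ ≤ ηG⁻¹ * (G x - G θtilde) ^ νG)
    (ρ : Measure (EuclideanSpace ℝ (Fin d))) [IsProbabilityMeasure ρ]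
    (hmom2 : Integrable (fun x => ‖x‖ ^ 2) ρ)
    (q : ℝ) (hq : ∫ x, s ((q - L x) / τ) ∂ρ = β)
    (r u δlev : ℝ) (hr : 0 < r ∧ r ≤ rG) (hu : 0 < u) (hδ : 0 < δlev)
    (Gtr Δr : ℝ)
    (hGtr : Gtr = sSup ((fun θ => G θ - G θtilde) '' Metric.ball θstar r))
    (hΔr : Δr = sSup (G '' Metric.ball θstar r) - Gmin)
    (hlev : q + δlev ≤ Lmin + min Linf ((ηL * rG) ^ ((1 : ℝ) / νL)))
    (hmass_cond : u + Gtr ≤ Ginf)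
    (hmass : 0 < (ρ (Metric.ball θstar r)).toReal)
    (V : ℝ) (hV : V = (1 / 2) * ∫ θ, ‖θ - θstar‖ ^ 2 ∂ρ) :
    ‖(∫ x, Real.exp (-α * G x) * s ((q - L x) / τ) ∂ρ)⁻¹ •
        (∫ x, (Real.exp (-α * G x) * s ((q - L x) / τ)) • x ∂ρ) - θstar‖
      ≤ rG + ηG⁻¹ * (u + Gtr) ^ νG
        + Real.exp (-α * u)
            / (s ((q - Lmin - LL * r) / τ) * (ρ (Metric.ball θstar r)).toReal)
          * (Real.sqrt (2 * V) + β * rG)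
        + Real.exp (α * Δr) * s (-δlev / τ)
            / (s ((q - Lmin - LL * r) / τ) * (ρ (Metric.ball θstar r)).toReal)
          * (Real.sqrt (2 * V) + rG) := by
  obtain ⟨hβ0, hβ1⟩ := hβ
  obtain ⟨hrG0, hrGRG⟩ := hrG
  obtain ⟨hr0, hrrG⟩ := hr
  set B : Set (EuclideanSpace ℝ (Fin d)) := Metric.ball θstar r with hBdef
  set w : EuclideanSpace ℝ (Fin d) → ℝ := fun x => Real.exp (-α * G x) * s ((q - L x) / τ) with hwdef
  set cin : ℝ := s ((q - Lmin - LL * r) / τ) with hcindef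
  set cout : ℝ := s (-δlev / τ) with hcoutdef
  set pB : ℝ := (ρ B).toReal with hpBdef
  let g : EuclideanSpace ℝ (Fin d) → ℝ := fun x => ‖x - θstar‖
  let η : EuclideanSpace ℝ (Fin d) → ℝ := fun x => s ((q - L x) / τ)
  -- continuity of L and G
  have hLcont : Continuous L := by
    have : LipschitzWith (Real.toNNReal LL) L := by
      apply LipschitzWith.of_dist_le_mul
      intro x y
      rw [Real.dist_eq, dist_eq_norm]
      exact (hLlip x y).trans
        (mul_le_mul_of_nonneg_right (Real.le_coe_toNNReal LL) (norm_nonneg _))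
    exact this.continuous
  have hGcont : Continuous G := by
    have : LipschitzWith (Real.toNNReal LG) G := by
      apply LipschitzWith.of_dist_le_mul
      intro x y
      rw [Real.dist_eq, dist_eq_norm]
      exact (hGlip x y).trans
        (mul_le_mul_of_nonneg_right (Real.le_coe_toNNReal LG) (norm_nonneg _))
    exact this.continuous
  have hLθstar : L θstar = Lmin := by rw [hΘ] at hθstar; exact hθstar
  -- positivity basics
  have hcin_pos : 0 < cin := hs_pos _
  have hcout_pos : 0 < cout := hs_pos _
  have hη_pos : ∀ x, 0 < η x := fun x => hs_pos _
  have hη_lt1 : ∀ x, η x < 1 := fun x => hs_lt1 _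
  have hw_pos : ∀ x, 0 < w x := fun x => mul_pos (Real.exp_pos _) (hs_pos _)
  have hw_le : ∀ x, w x ≤ Real.exp (-α * Gmin) := by
    intro x
    have h1 : Real.exp (-α * G x) ≤ Real.exp (-α * Gmin) :=
      Real.exp_le_exp.mpr (by nlinarith [(hGbd x).1])
    calc w x ≤ Real.exp (-α * G x) * 1 :=
          mul_le_mul_of_nonneg_left (hη_lt1 x).le (Real.exp_pos _).le
      _ = Real.exp (-α * G x) := mul_one _
      _ ≤ Real.exp (-α * Gmin) := h1
  -- continuity of the weight
  have hη_cont : Continuous η :=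
    hs_cont.comp ((continuous_const.sub hLcont).div_const τ)
  have hw_cont : Continuous w :=
    ((Real.continuous_exp.comp (continuous_const.mul hGcont))).mul hη_cont
  have hg_cont : Continuous g := (continuous_id.sub continuous_const).norm
  -- integrability
  have hg2_int : Integrable (fun x => ‖x - θstar‖ ^ 2) ρ := by
    apply Integrable.mono' ((hmom2.const_mul 2).add (integrable_const (2 * ‖θstar‖ ^ 2)))
      ((hg_cont.pow 2).aestronglyMeasurable)
    filter_upwards with x
    have h1 : ‖x - θstar‖ ≤ ‖x‖ + ‖θstar‖ := norm_sub_le _ _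
    have h2 : (0:ℝ) ≤ ‖x - θstar‖ := norm_nonneg _
    simp only [Pi.add_apply]
    show ‖‖x - θstar‖ ^ 2‖ ≤ _
    rw [Real.norm_of_nonneg (by positivity)]
    nlinarith [sq_nonneg (‖x‖ - ‖θstar‖), mul_self_le_mul_self h2 h1]
  have hg_int : Integrable g ρ := by
    apply Integrable.mono' (hg2_int.add (integrable_const 1)) hg_cont.aestronglyMeasurable
    filter_upwards with x
    simp only [Pi.add_apply]
    rw [Real.norm_of_nonneg (norm_nonneg _)]
    nlinarith [norm_nonneg (x - θstar)]
  have hnorm_int : Integrable (fun x : EuclideanSpace ℝ (Fin d) => ‖x‖) ρ := by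
    apply Integrable.mono' (hmom2.add (integrable_const 1)) continuous_norm.aestronglyMeasurable
    filter_upwards with x
    simp only [Pi.add_apply]
    rw [Real.norm_of_nonneg (norm_nonneg _)]
    nlinarith [norm_nonneg x]
  have hw_int : Integrable w ρ := by
    apply Integrable.mono' (integrable_const (Real.exp (-α * Gmin))) hw_cont.aestronglyMeasurable
    filter_upwards with x
    rw [Real.norm_of_nonneg (hw_pos x).le]
    exact hw_le x
  have hη_int : Integrable η ρ := by
    apply Integrable.mono' (integrable_const 1) hη_cont.aestronglyMeasurable
    filter_upwards with x
    rw [Real.norm_of_nonneg (hη_pos x).le]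
    exact (hη_lt1 x).le
  have hwx_int : Integrable (fun x => w x • x) ρ := by
    apply Integrable.mono' (hnorm_int.const_mul (Real.exp (-α * Gmin)))
      (hw_cont.smul continuous_id).aestronglyMeasurable
    filter_upwards with x
    show ‖w x • x‖ ≤ _
    rw [norm_smul, Real.norm_of_nonneg (hw_pos x).le]
    exact mul_le_mul_of_nonneg_right (hw_le x) (norm_nonneg x)
  -- distance from θtilde to θstar
  set ct : ℝ := ‖θstar - θtilde‖ with hctdef
  have hct_le : ct ≤ rG := by rw [hctdef, norm_sub_rev]; exact hθtilde_ball.le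
  have hct_nonneg : 0 ≤ ct := norm_nonneg _
  have hnorm_tilde : ∀ x : EuclideanSpace ℝ (Fin d), ‖x - θtilde‖ ≤ g x + ct := by
    intro x
    calc ‖x - θtilde‖ = ‖(x - θstar) + (θstar - θtilde)‖ := by abel_nf
      _ ≤ ‖x - θstar‖ + ‖θstar - θtilde‖ := norm_add_le _ _
  -- Cauchy–Schwarz bound
  have hSQ : ∫ x, g x ∂ρ ≤ Real.sqrt (2 * V) := by
    have h2V : 2 * V = ∫ θ, ‖θ - θstar‖ ^ 2 ∂ρ := by rw [hV]; ring
    rw [h2V]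
    exact integral_le_sqrt_integral_sq ρ hg_int hg2_int (fun x => norm_nonneg _)
  have hSQ_nonneg : 0 ≤ Real.sqrt (2 * V) := Real.sqrt_nonneg _
  -- ball facts
  have hB_meas : MeasurableSet B := measurableSet_ball
  have hB_infDist : ∀ x ∈ B, Metric.infDist x Θ ≤ rG := by
    intro x hx
    calc Metric.infDist x Θ ≤ dist x θstar := Metric.infDist_le_dist_of_mem hθstar
      _ ≤ r := (Metric.mem_ball.mp hx).le
      _ ≤ rG := hrrG
  have hθstar_B : θstar ∈ B := Metric.mem_ball_self hr0
  have hGtr_bdd : BddAbove ((fun θ => G θ - G θtilde) '' B) := by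
    refine ⟨Gmax - G θtilde, ?_⟩
    rintro _ ⟨y, _, rfl⟩
    have := (hGbd y).2
    dsimp only
    linarith
  have hGB_bdd : BddAbove (G '' B) := by
    refine ⟨Gmax, ?_⟩
    rintro _ ⟨y, _, rfl⟩
    exact (hGbd y).2
  have hub_ball : ∀ x ∈ B, G x - G θtilde ≤ Gtr := by
    intro x hx
    rw [hGtr]
    exact le_csSup hGtr_bdd ⟨x, hx, rfl⟩
  have hub_ball2 : ∀ x ∈ B, G x ≤ Gmin + Δr := by
    intro x hx
    rw [hΔr]
    have := le_csSup hGB_bdd ⟨x, hx, rfl⟩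
    linarith
  have hGtr_nonneg : 0 ≤ Gtr := by
    have h1 : G θtilde ≤ G θstar := hθtilde_min θstar
      (by rw [Metric.infDist_zero_of_mem hθstar]; exact hrG0.le)
    have h2 := hub_ball θstar hθstar_B
    linarith
  have huGtr_nonneg : 0 ≤ u + Gtr := by linarith
  have hc1_nonneg : 0 ≤ ηG⁻¹ * (u + Gtr) ^ νG :=
    mul_nonneg (inv_nonneg.mpr hηG.le) (Real.rpow_nonneg huGtr_nonneg _)
  -- key claim: points far from Θ have small quantile weight
  have hfar : ∀ x : EuclideanSpace ℝ (Fin d), rG < Metric.infDist x Θ → η x ≤ cout := by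
    intro x hx
    by_contra hcon
    push_neg at hcon
    have hlt : -δlev / τ < (q - L x) / τ := hs_mono.lt_iff_lt.mp hcon
    have hLx : L x < q + δlev := by
      have h := mul_lt_mul_of_pos_right hlt hτ
      rw [div_mul_cancel₀ _ hτ.ne', div_mul_cancel₀ _ hτ.ne'] at h
      linarith
    have h1 : L x - Lmin < min Linf ((ηL * rG) ^ ((1 : ℝ) / νL)) := by linarith
    have h2 : L x - Lmin ≤ Linf := (h1.le.trans (min_le_left _ _))
    have h3 : L x - Lmin ≤ (ηL * rG) ^ ((1 : ℝ) / νL) := h1.le.trans (min_le_right _ _)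
    have h0 : 0 ≤ L x - Lmin := by linarith [(hLbd x).1]
    have h4 : Metric.infDist x Θ ≤ ηL⁻¹ * (L x - Lmin) ^ νL := hHolder x h2
    have h5 : (L x - Lmin) ^ νL ≤ ((ηL * rG) ^ ((1 : ℝ) / νL)) ^ νL :=
      Real.rpow_le_rpow h0 h3 hνL.le
    have h6 : ((ηL * rG) ^ ((1 : ℝ) / νL)) ^ νL = ηL * rG := by
      rw [← Real.rpow_mul (by positivity : (0:ℝ) ≤ ηL * rG), one_div,
        inv_mul_cancel₀ hνL.ne', Real.rpow_one]
    have h7 : Metric.infDist x Θ ≤ rG := by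
      calc Metric.infDist x Θ ≤ ηL⁻¹ * (L x - Lmin) ^ νL := h4
        _ ≤ ηL⁻¹ * (ηL * rG) := by
            apply mul_le_mul_of_nonneg_left _ (inv_nonneg.mpr hηL.le)
            rw [← h6]; exact h5
        _ = rG := by field_simp
    linarith
    -- quantile integral in terms of η
  have hqη : ∫ x, η x ∂ρ = β := hq
  have hηg_int : Integrable (fun x => η x * ‖x - θstar‖) ρ := by
    apply Integrable.mono' hg_int (hη_cont.mul hg_cont).aestronglyMeasurable
    filter_upwards with x
    show ‖η x * ‖x - θstar‖‖ ≤ ‖x - θstar‖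
    rw [Real.norm_of_nonneg (mul_nonneg (hη_pos x).le (norm_nonneg _))]
    nlinarith [(hη_pos x).le, (hη_lt1 x).le, norm_nonneg (x - θstar)]
  have hgc_int : Integrable (fun x => ‖x - θstar‖ + ct) ρ := hg_int.add (integrable_const ct)
  -- the function F = w(x) ‖x - θtilde‖
  have hF_cont : Continuous (fun x => w x * ‖x - θtilde‖) :=
    hw_cont.mul (continuous_id.sub continuous_const).norm
  have hF_nonneg : ∀ x : EuclideanSpace ℝ (Fin d), 0 ≤ w x * ‖x - θtilde‖ :=
    fun x => mul_nonneg (hw_pos x).le (norm_nonneg _)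
  have hF_int : Integrable (fun x => w x * ‖x - θtilde‖) ρ := by
    apply Integrable.mono' (hgc_int.const_mul (Real.exp (-α * Gmin)))
      hF_cont.aestronglyMeasurable
    filter_upwards with x
    rw [Real.norm_of_nonneg (hF_nonneg x)]
    exact mul_le_mul (hw_le x) (hnorm_tilde x) (norm_nonneg _) (Real.exp_pos _).le
  rcases le_or_gt 0 LL with hLL | hLL
  · -- main case : `LL ≥ 0`
    -- lower bound for η on the ball
    have hηB : ∀ x ∈ B, cin ≤ η x := by
      intro x hx
      have h3 : ‖x - θstar‖ ≤ r := by
        have := Metric.mem_ball.mp hx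
        rw [dist_eq_norm] at this
        linarith
      have h2 := hLlip x θstar
      have h1 : L x - L θstar ≤ |L x - L θstar| := le_abs_self _
      have h4 : LL * ‖x - θstar‖ ≤ LL * r := mul_le_mul_of_nonneg_left h3 hLL
      have hLx : L x ≤ Lmin + LL * r := by rw [hLθstar] at h1 h2; linarith
      apply hs_mono.monotone
      have h5 : q - Lmin - LL * r ≤ q - L x := by linarith
      rw [div_le_div_iff₀ hτ hτ]
      nlinarith [mul_le_mul_of_nonneg_right h5 hτ.le]
    -- lower bounds for the normalization
    have hI_lb : ∀ c : ℝ, (∀ x ∈ B, c ≤ w x) → c * pB ≤ ∫ x, w x ∂ρ := by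
      intro c hc
      calc c * pB ≤ ∫ x in B, w x ∂ρ :=
            by have h := setIntegral_ge_of_const_le hB_meas (measure_ne_top ρ B) hc hw_int.integrableOn; rw [smul_eq_mul, mul_comm] at h; exact h
        _ ≤ ∫ x, w x ∂ρ :=
            setIntegral_le_integral hw_int (Filter.Eventually.of_forall fun x => (hw_pos x).le)
    have hwB1 : ∀ x ∈ B, Real.exp (-α * (G θtilde + Gtr)) * cin ≤ w x := by
      intro x hx
      have he : Real.exp (-α * (G θtilde + Gtr)) ≤ Real.exp (-α * G x) := by
        apply Real.exp_le_exp.mpr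
        nlinarith [mul_le_mul_of_nonneg_left (hub_ball x hx) hα.le]
      exact mul_le_mul he (hηB x hx) hcin_pos.le (Real.exp_pos _).le
    have hwB2 : ∀ x ∈ B, Real.exp (-α * (Gmin + Δr)) * cin ≤ w x := by
      intro x hx
      have he : Real.exp (-α * (Gmin + Δr)) ≤ Real.exp (-α * G x) := by
        apply Real.exp_le_exp.mpr
        nlinarith [mul_le_mul_of_nonneg_left (hub_ball2 x hx) hα.le]
      exact mul_le_mul he (hηB x hx) hcin_pos.le (Real.exp_pos _).le
    have hI1 : Real.exp (-α * (G θtilde + Gtr)) * cin * pB ≤ ∫ x, w x ∂ρ :=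
      hI_lb _ hwB1
    have hI2 : Real.exp (-α * (Gmin + Δr)) * cin * pB ≤ ∫ x, w x ∂ρ :=
      hI_lb _ hwB2
    have hI_pos : 0 < ∫ x, w x ∂ρ :=
      lt_of_lt_of_le (mul_pos (mul_pos (Real.exp_pos _) hcin_pos) hmass) hI1
    -- partition of space
    set T : Set (EuclideanSpace ℝ (Fin d)) := {x | Metric.infDist x Θ ≤ rG} with hTdef
    set P : Set (EuclideanSpace ℝ (Fin d)) := {x | G x - G θtilde ≤ u + Gtr} with hPdef
    have hT_meas : MeasurableSet T :=
      measurableSet_le (Metric.continuous_infDist_pt Θ).measurable measurable_const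
    have hP_meas : MeasurableSet P :=
      measurableSet_le (hGcont.sub continuous_const).measurable measurable_const
    have hsplit : ∫ x, w x * ‖x - θtilde‖ ∂ρ
        = (∫ x in T ∩ P, w x * ‖x - θtilde‖ ∂ρ)
          + (∫ x in T \ P, w x * ‖x - θtilde‖ ∂ρ)
          + (∫ x in Tᶜ, w x * ‖x - θtilde‖ ∂ρ) := by
      have h1 := integral_add_compl hT_meas hF_int
      have h2 := integral_inter_add_diff (s := T) (t := P) hP_meas hF_int.integrableOn
      linarith
    -- bound on T ∩ P
    have hA1 : ∫ x in T ∩ P, w x * ‖x - θtilde‖ ∂ρ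
        ≤ (ηG⁻¹ * (u + Gtr) ^ νG) * ∫ x, w x ∂ρ := by
      have hpt : ∀ x ∈ T ∩ P, w x * ‖x - θtilde‖ ≤ (ηG⁻¹ * (u + Gtr) ^ νG) * w x := by
        rintro x ⟨hxT, hxP⟩
        have hxT' : Metric.infDist x Θ ≤ rG := hxT
        have hxP' : G x - G θtilde ≤ u + Gtr := hxP
        have h1 : ‖x - θtilde‖ ≤ ηG⁻¹ * (G x - G θtilde) ^ νG :=
          hGgrowth x hxT' (le_trans hxP' hmass_cond)
        have h0 : 0 ≤ G x - G θtilde := sub_nonneg.mpr (hθtilde_min x hxT')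
        have h2 : (G x - G θtilde) ^ νG ≤ (u + Gtr) ^ νG :=
          Real.rpow_le_rpow h0 hxP' hνG.le
        have h3 : ‖x - θtilde‖ ≤ ηG⁻¹ * (u + Gtr) ^ νG :=
          h1.trans (mul_le_mul_of_nonneg_left h2 (inv_nonneg.mpr hηG.le))
        calc w x * ‖x - θtilde‖ ≤ w x * (ηG⁻¹ * (u + Gtr) ^ νG) :=
              mul_le_mul_of_nonneg_left h3 (hw_pos x).le
          _ = (ηG⁻¹ * (u + Gtr) ^ νG) * w x := mul_comm _ _
      calc ∫ x in T ∩ P, w x * ‖x - θtilde‖ ∂ρ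
          ≤ ∫ x in T ∩ P, (ηG⁻¹ * (u + Gtr) ^ νG) * w x ∂ρ :=
            setIntegral_mono_on hF_int.integrableOn
              ((hw_int.const_mul _).integrableOn) (hT_meas.inter hP_meas) hpt
        _ = (ηG⁻¹ * (u + Gtr) ^ νG) * ∫ x in T ∩ P, w x ∂ρ := integral_const_mul _ _
        _ ≤ (ηG⁻¹ * (u + Gtr) ^ νG) * ∫ x, w x ∂ρ := by
            apply mul_le_mul_of_nonneg_left _ hc1_nonneg
            exact setIntegral_le_integral hw_int (Filter.Eventually.of_forall fun x => (hw_pos x).le)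
    -- bound on T \ P
    have haux2_int : Integrable (fun x => η x * (‖x - θstar‖ + ct)) ρ := by
      apply Integrable.mono' hgc_int (hη_cont.mul (hg_cont.add continuous_const)).aestronglyMeasurable
      filter_upwards with x
      have hb : (0:ℝ) ≤ ‖x - θstar‖ + ct := by positivity
      show ‖η x * (‖x - θstar‖ + ct)‖ ≤ _
      rw [Real.norm_of_nonneg (mul_nonneg (hη_pos x).le hb)]
      nlinarith [(hη_pos x).le, (hη_lt1 x).le]
    have hint2 : ∫ x, η x * (‖x - θstar‖ + ct) ∂ρ ≤ Real.sqrt (2 * V) + β * rG := by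
      have he1 : ∫ x, η x * (‖x - θstar‖ + ct) ∂ρ
          = (∫ x, η x * ‖x - θstar‖ ∂ρ) + β * ct := by
        simp_rw [mul_add]
        rw [integral_add hηg_int (hη_int.mul_const ct), integral_mul_const, hqη]
      have he2 : ∫ x, η x * ‖x - θstar‖ ∂ρ ≤ ∫ x, ‖x - θstar‖ ∂ρ := by
        apply integral_mono hηg_int hg_int
        intro x
        show η x * ‖x - θstar‖ ≤ ‖x - θstar‖
        nlinarith [(hη_pos x).le, (hη_lt1 x).le, norm_nonneg (x - θstar)]
      have he3 : β * ct ≤ β * rG := mul_le_mul_of_nonneg_left hct_le hβ0.le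
      rw [he1]
      linarith [hSQ]
    have hA2 : ∫ x in T \ P, w x * ‖x - θtilde‖ ∂ρ
        ≤ Real.exp (-α * (G θtilde + (u + Gtr))) * (Real.sqrt (2 * V) + β * rG) := by
      have hpt : ∀ x ∈ T \ P, w x * ‖x - θtilde‖
          ≤ Real.exp (-α * (G θtilde + (u + Gtr))) * (η x * (‖x - θstar‖ + ct)) := by
        rintro x ⟨_, hxP⟩
        have hGx : G θtilde + (u + Gtr) ≤ G x := by
          have : ¬ (G x - G θtilde ≤ u + Gtr) := hxP
          push_neg at this
          linarith
        have he : Real.exp (-α * G x) ≤ Real.exp (-α * (G θtilde + (u + Gtr))) := by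
          apply Real.exp_le_exp.mpr
          nlinarith [mul_le_mul_of_nonneg_left hGx hα.le]
        have hb : (0:ℝ) ≤ ‖x - θstar‖ + ct := by positivity
        calc w x * ‖x - θtilde‖
            ≤ (Real.exp (-α * (G θtilde + (u + Gtr))) * η x) * (‖x - θstar‖ + ct) :=
              mul_le_mul (mul_le_mul_of_nonneg_right he (hη_pos x).le)
                (hnorm_tilde x) (norm_nonneg _)
                (mul_nonneg (Real.exp_pos _).le (hη_pos x).le)
          _ = Real.exp (-α * (G θtilde + (u + Gtr))) * (η x * (‖x - θstar‖ + ct)) := by ring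
      calc ∫ x in T \ P, w x * ‖x - θtilde‖ ∂ρ
          ≤ ∫ x in T \ P, Real.exp (-α * (G θtilde + (u + Gtr))) * (η x * (‖x - θstar‖ + ct)) ∂ρ :=
            setIntegral_mono_on hF_int.integrableOn
              ((haux2_int.const_mul _).integrableOn) (hT_meas.diff hP_meas) hpt
        _ ≤ ∫ x, Real.exp (-α * (G θtilde + (u + Gtr))) * (η x * (‖x - θstar‖ + ct)) ∂ρ := by
            apply setIntegral_le_integral (haux2_int.const_mul _)
            filter_upwards with x
            have hb : (0:ℝ) ≤ ‖x - θstar‖ + ct := by positivity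
            exact mul_nonneg (Real.exp_pos _).le (mul_nonneg (hη_pos x).le hb)
        _ = Real.exp (-α * (G θtilde + (u + Gtr))) * ∫ x, η x * (‖x - θstar‖ + ct) ∂ρ :=
            integral_const_mul _ _
        _ ≤ Real.exp (-α * (G θtilde + (u + Gtr))) * (Real.sqrt (2 * V) + β * rG) :=
            mul_le_mul_of_nonneg_left hint2 (Real.exp_pos _).le
    -- bound on Tᶜ
    have hA3 : ∫ x in Tᶜ, w x * ‖x - θtilde‖ ∂ρ
        ≤ (Real.exp (-α * Gmin) * cout) * (Real.sqrt (2 * V) + rG) := by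
      have hpt : ∀ x ∈ Tᶜ, w x * ‖x - θtilde‖
          ≤ (Real.exp (-α * Gmin) * cout) * (‖x - θstar‖ + ct) := by
        intro x hx
        have hxT : rG < Metric.infDist x Θ := by
          have : ¬ (Metric.infDist x Θ ≤ rG) := hx
          push_neg at this
          exact this
        have hηc : η x ≤ cout := hfar x hxT
        have he : Real.exp (-α * G x) ≤ Real.exp (-α * Gmin) := by
          apply Real.exp_le_exp.mpr
          nlinarith [mul_le_mul_of_nonneg_left (hGbd x).1 hα.le]
        exact mul_le_mul (mul_le_mul he hηc (hη_pos x).le (Real.exp_pos _).le)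
          (hnorm_tilde x) (norm_nonneg _)
          (mul_nonneg (Real.exp_pos _).le hcout_pos.le)
      calc ∫ x in Tᶜ, w x * ‖x - θtilde‖ ∂ρ
          ≤ ∫ x in Tᶜ, (Real.exp (-α * Gmin) * cout) * (‖x - θstar‖ + ct) ∂ρ :=
            setIntegral_mono_on hF_int.integrableOn
              ((hgc_int.const_mul _).integrableOn) hT_meas.compl hpt
        _ ≤ ∫ x, (Real.exp (-α * Gmin) * cout) * (‖x - θstar‖ + ct) ∂ρ := by
            apply setIntegral_le_integral (hgc_int.const_mul _)
            filter_upwards with x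
            have hb : (0:ℝ) ≤ ‖x - θstar‖ + ct := by positivity
            exact mul_nonneg (mul_nonneg (Real.exp_pos _).le hcout_pos.le) hb
        _ = (Real.exp (-α * Gmin) * cout) * ∫ x, (‖x - θstar‖ + ct) ∂ρ :=
            integral_const_mul _ _
        _ ≤ (Real.exp (-α * Gmin) * cout) * (Real.sqrt (2 * V) + rG) := by
            apply mul_le_mul_of_nonneg_left _ (mul_nonneg (Real.exp_pos _).le hcout_pos.le)
            rw [integral_add hg_int (integrable_const ct), integral_const]
            simp only [measure_univ, probReal_univ, ENNReal.toReal_one, smul_eq_mul, one_mul]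
            linarith [hSQ]
    -- numerator identity
    have hMsub : (∫ x, w x • x ∂ρ) - (∫ x, w x ∂ρ) • θtilde
        = ∫ x, w x • (x - θtilde) ∂ρ := by
      rw [← integral_smul_const w θtilde, ← integral_sub hwx_int (hw_int.smul_const θtilde)]
      simp_rw [smul_sub]
    have hnorm_num : ‖∫ x, w x • (x - θtilde) ∂ρ‖ ≤ ∫ x, w x * ‖x - θtilde‖ ∂ρ := by
      calc ‖∫ x, w x • (x - θtilde) ∂ρ‖ ≤ ∫ x, ‖w x • (x - θtilde)‖ ∂ρ :=
            norm_integral_le_integral_norm _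
        _ = ∫ x, w x * ‖x - θtilde‖ ∂ρ := by
            apply integral_congr_ae
            filter_upwards with x
            rw [norm_smul, Real.norm_of_nonneg (hw_pos x).le]
    have hmain : ‖(∫ x, w x ∂ρ)⁻¹ • (∫ x, w x • x ∂ρ) - θtilde‖
        ≤ (∫ x, w x ∂ρ)⁻¹ * ∫ x, w x * ‖x - θtilde‖ ∂ρ := by
      have heq : (∫ x, w x ∂ρ)⁻¹ • (∫ x, w x • x ∂ρ) - θtilde
          = (∫ x, w x ∂ρ)⁻¹ • (∫ x, w x • (x - θtilde) ∂ρ) := by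
        rw [← hMsub, smul_sub, smul_smul, inv_mul_cancel₀ hI_pos.ne', one_smul]
      rw [heq, norm_smul, Real.norm_of_nonneg (inv_nonneg.mpr hI_pos.le)]
      exact mul_le_mul_of_nonneg_left hnorm_num (inv_nonneg.mpr hI_pos.le)
    -- combining the three pieces
    set I : ℝ := ∫ x, w x ∂ρ with hIdef
    have hFtot : ∫ x, w x * ‖x - θtilde‖ ∂ρ
        ≤ (ηG⁻¹ * (u + Gtr) ^ νG) * I
          + Real.exp (-α * (G θtilde + (u + Gtr))) * (Real.sqrt (2 * V) + β * rG)
          + (Real.exp (-α * Gmin) * cout) * (Real.sqrt (2 * V) + rG) := by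
      rw [hsplit]
      linarith [hA1, hA2, hA3]
    have hX2_nonneg : (0:ℝ) ≤ Real.sqrt (2 * V) + β * rG := by positivity
    have hX3_nonneg : (0:ℝ) ≤ Real.sqrt (2 * V) + rG := by positivity
    -- the two tail terms
    have ht2 : I⁻¹ * (Real.exp (-α * (G θtilde + (u + Gtr))) * (Real.sqrt (2 * V) + β * rG))
        ≤ Real.exp (-α * u) / (cin * pB) * (Real.sqrt (2 * V) + β * rG) := by
      have hd : 0 < Real.exp (-α * (G θtilde + Gtr)) * cin * pB :=
        mul_pos (mul_pos (Real.exp_pos _) hcin_pos) hmass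
      have hIinv : I⁻¹ ≤ (Real.exp (-α * (G θtilde + Gtr)) * cin * pB)⁻¹ := by
        rw [inv_eq_one_div, inv_eq_one_div]
        exact one_div_le_one_div_of_le hd hI1
      calc I⁻¹ * (Real.exp (-α * (G θtilde + (u + Gtr))) * (Real.sqrt (2 * V) + β * rG))
          ≤ (Real.exp (-α * (G θtilde + Gtr)) * cin * pB)⁻¹
              * (Real.exp (-α * (G θtilde + (u + Gtr))) * (Real.sqrt (2 * V) + β * rG)) := by
            apply mul_le_mul_of_nonneg_right hIinv
            exact mul_nonneg (Real.exp_pos _).le hX2_nonneg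
        _ = Real.exp (-α * u) / (cin * pB) * (Real.sqrt (2 * V) + β * rG) := by
            rw [show -α * (G θtilde + (u + Gtr)) = -α * u + -α * (G θtilde + Gtr) by ring,
              Real.exp_add]
            field_simp
    have ht3 : I⁻¹ * ((Real.exp (-α * Gmin) * cout) * (Real.sqrt (2 * V) + rG))
        ≤ Real.exp (α * Δr) * cout / (cin * pB) * (Real.sqrt (2 * V) + rG) := by
      have hd : 0 < Real.exp (-α * (Gmin + Δr)) * cin * pB :=
        mul_pos (mul_pos (Real.exp_pos _) hcin_pos) hmass
      have hIinv : I⁻¹ ≤ (Real.exp (-α * (Gmin + Δr)) * cin * pB)⁻¹ := by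
        rw [inv_eq_one_div, inv_eq_one_div]
        exact one_div_le_one_div_of_le hd hI2
      calc I⁻¹ * ((Real.exp (-α * Gmin) * cout) * (Real.sqrt (2 * V) + rG))
          ≤ (Real.exp (-α * (Gmin + Δr)) * cin * pB)⁻¹
              * ((Real.exp (-α * Gmin) * cout) * (Real.sqrt (2 * V) + rG)) := by
            apply mul_le_mul_of_nonneg_right hIinv
            exact mul_nonneg (mul_nonneg (Real.exp_pos _).le hcout_pos.le) hX3_nonneg
        _ = Real.exp (α * Δr) * cout / (cin * pB) * (Real.sqrt (2 * V) + rG) := by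
            rw [show -α * Gmin = α * Δr + -α * (Gmin + Δr) by ring, Real.exp_add]
            field_simp
    -- final assembly
    have htri : ‖I⁻¹ • (∫ x, w x • x ∂ρ) - θstar‖
        ≤ ‖I⁻¹ • (∫ x, w x • x ∂ρ) - θtilde‖ + ‖θtilde - θstar‖ := by
      have h := dist_triangle (I⁻¹ • (∫ x, w x • x ∂ρ)) θtilde θstar
      simpa [dist_eq_norm] using h
    have hImain : ‖I⁻¹ • (∫ x, w x • x ∂ρ) - θtilde‖
        ≤ ηG⁻¹ * (u + Gtr) ^ νG
          + I⁻¹ * (Real.exp (-α * (G θtilde + (u + Gtr))) * (Real.sqrt (2 * V) + β * rG))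
          + I⁻¹ * ((Real.exp (-α * Gmin) * cout) * (Real.sqrt (2 * V) + rG)) := by
      have h1 : I⁻¹ * ∫ x, w x * ‖x - θtilde‖ ∂ρ
          ≤ I⁻¹ * ((ηG⁻¹ * (u + Gtr) ^ νG) * I
            + Real.exp (-α * (G θtilde + (u + Gtr))) * (Real.sqrt (2 * V) + β * rG)
            + (Real.exp (-α * Gmin) * cout) * (Real.sqrt (2 * V) + rG)) :=
        mul_le_mul_of_nonneg_left hFtot (inv_nonneg.mpr hI_pos.le)
      have h2 : I⁻¹ * ((ηG⁻¹ * (u + Gtr) ^ νG) * I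
            + Real.exp (-α * (G θtilde + (u + Gtr))) * (Real.sqrt (2 * V) + β * rG)
            + (Real.exp (-α * Gmin) * cout) * (Real.sqrt (2 * V) + rG))
          = ηG⁻¹ * (u + Gtr) ^ νG
            + I⁻¹ * (Real.exp (-α * (G θtilde + (u + Gtr))) * (Real.sqrt (2 * V) + β * rG))
            + I⁻¹ * ((Real.exp (-α * Gmin) * cout) * (Real.sqrt (2 * V) + rG)) := by
        field_simp
      linarith [hmain]
    have hct2 : ‖θtilde - θstar‖ ≤ rG := hθtilde_ball.le
    linarith [htri, hImain, ht2, ht3]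
  · -- degenerate case : `LL < 0`, the space is a single point
    have hsub : ∀ x : EuclideanSpace ℝ (Fin d), x = θstar := by
      intro x
      by_contra hne
      have h1 : (0:ℝ) < ‖x - θstar‖ := by
        rw [norm_pos_iff, sub_ne_zero]
        exact hne
      have h2 := hLlip x θstar
      nlinarith [abs_nonneg (L x - L θstar)]
    have hwc : (fun x => w x • x) = fun _ : EuclideanSpace ℝ (Fin d) => w θstar • θstar := by
      funext x
      rw [hsub x]
    have hwc2 : w = fun _ : EuclideanSpace ℝ (Fin d) => w θstar := by
      funext x
      rw [hsub x]
    have hM : (∫ x, w x • x ∂ρ) = w θstar • θstar := by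
      rw [hwc, integral_const]
      simp [measure_univ]
    have hI : (∫ x, w x ∂ρ) = w θstar := by
      rw [hwc2, integral_const]
      simp [measure_univ]
    have hLHS : ‖(∫ x, w x ∂ρ)⁻¹ • (∫ x, w x • x ∂ρ) - θstar‖ = 0 := by
      rw [hM, hI, smul_smul, inv_mul_cancel₀ (hw_pos θstar).ne', one_smul, sub_self, norm_zero]
    rw [hLHS]
    have h2 : (0:ℝ) ≤ ηG⁻¹ * (u + Gtr) ^ νG := hc1_nonneg
    have h3 : (0:ℝ) ≤ Real.exp (-α * u) / (cin * pB) * (Real.sqrt (2 * V) + β * rG) := by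
      apply mul_nonneg
      · exact div_nonneg (Real.exp_pos _).le (mul_nonneg hcin_pos.le hmass.le)
      · positivity
    have h4 : (0:ℝ) ≤ Real.exp (α * Δr) * cout / (cin * pB) * (Real.sqrt (2 * V) + rG) := by
      apply mul_nonneg
      · exact div_nonneg (mul_nonneg (Real.exp_pos _).le hcout_pos.le)
          (mul_nonneg hcin_pos.le hmass.le)
      · positivity
    linarith [hrG0]
end

section
/- Let ρ be a Borel probability measure on ℝ^d with finite second moment, and let m, θ* ∈ ℝ^d and λ, σ > 0. Set V = (1/2) ∫ ‖θ − θ*‖₂² dρ(θ), M = ‖m − θ*‖₂, a = 2λ − dσ², b = √2 (λ + dσ²), and c_d = dσ²/2. Then the quantity E = −λ ∫ ⟨θ − θ*, θ − m⟩ dρ(θ) + (dσ²/2) ∫ ‖θ − m‖₂² dρ(θ) satisfies the two-sided bound −aV − b √V · M ≤ E ≤ −aV + b √V · M + c_d M². -/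
open MeasureTheory

lemma my_l1_le_sqrt_l2 {α : Type*} [MeasurableSpace α] (μ : Measure α) [IsProbabilityMeasure μ]
    {u : α → ℝ} (hu_nonneg : ∀ x, 0 ≤ u x) (husm : AEStronglyMeasurable u μ)
    (hu2 : Integrable (fun x => u x ^ 2) μ) :
    ∫ x, u x ∂μ ≤ Real.sqrt (∫ x, u x ^ 2 ∂μ) := by
  have hpq : Real.HolderConjugate 2 2 := Real.HolderConjugate.two_two
  have hmem : MemLp u 2 μ := (memLp_two_iff_integrable_sq husm).2 hu2
  have hone : MemLp (fun _ : α => (1 : ℝ)) 2 μ := memLp_const 1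
  have h := integral_mul_le_Lp_mul_Lq_of_nonneg hpq
    (Filter.Eventually.of_forall hu_nonneg)
    (Filter.Eventually.of_forall fun _ => zero_le_one)
    (by simpa using hmem) (by simpa using hone)
  simp only [mul_one] at h
  have h2 : (∫ x, u x ^ (2:ℝ) ∂μ) = ∫ x, u x ^ 2 ∂μ := by
    refine integral_congr_ae (Filter.Eventually.of_forall fun x => ?_)
    show u x ^ (2:ℝ) = u x ^ (2:ℕ)
    rw [← Real.rpow_natCast (u x) 2]; norm_num
  have h3 : (∫ _ : α, (1:ℝ) ^ (2:ℝ) ∂μ) = 1 := by simp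
  rw [h2, h3, Real.one_rpow, mul_one] at h
  simpa [Real.sqrt_eq_rpow] using h

set_option maxHeartbeats 1000000 in
/-- Two-sided Lyapunov bound for the drift-diffusion functional. -/
theorem lyapunov_two_sided_bound
    (d : ℕ) (ρ : Measure (EuclideanSpace ℝ (Fin d))) [IsProbabilityMeasure ρ]
    (hmom2 : Integrable (fun θ => ‖θ‖ ^ 2) ρ)
    (m θstar : EuclideanSpace ℝ (Fin d))
    (lam σ : ℝ) (hlam : 0 < lam) (hσ : 0 < σ)
    (V M a b cd E : ℝ)
    (hV : V = (1 / 2) * ∫ θ, ‖θ - θstar‖ ^ 2 ∂ρ)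
    (hM : M = ‖m - θstar‖)
    (ha : a = 2 * lam - d * σ ^ 2)
    (hb : b = Real.sqrt 2 * (lam + d * σ ^ 2))
    (hcd : cd = d * σ ^ 2 / 2)
    (hE : E = -lam * (∫ θ, (inner ℝ (θ - θstar) (θ - m) : ℝ) ∂ρ)
      + d * σ ^ 2 / 2 * ∫ θ, ‖θ - m‖ ^ 2 ∂ρ) :
    -a * V - b * Real.sqrt V * M ≤ E ∧
      E ≤ -a * V + b * Real.sqrt V * M + cd * M ^ 2 := by
  -- integrability of shifted squared norms
  have hsq : ∀ c : EuclideanSpace ℝ (Fin d), Integrable (fun θ => ‖θ - c‖ ^ 2) ρ := by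
    intro c
    refine Integrable.mono' ((hmom2.const_mul 2).add (integrable_const (2 * ‖c‖ ^ 2)))
      ((continuous_id.sub continuous_const).norm.pow 2).aestronglyMeasurable
      (Filter.Eventually.of_forall fun θ => ?_)
    have h1 : ‖θ - c‖ ≤ ‖θ‖ + ‖c‖ := norm_sub_le _ _
    have h2 : (0:ℝ) ≤ ‖θ - c‖ := norm_nonneg _
    simp only [Pi.add_apply]
    rw [Real.norm_of_nonneg (by positivity)]
    nlinarith [sq_nonneg (‖θ‖ - ‖c‖), pow_le_pow_left₀ h2 h1 2]
  -- integrability of the shifted norm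
  have hnorm : Integrable (fun θ => ‖θ - θstar‖) ρ := by
    have : MemLp (fun θ => ‖θ - θstar‖) 2 ρ :=
      (memLp_two_iff_integrable_sq
        (continuous_id.sub continuous_const).norm.aestronglyMeasurable).2 (hsq θstar)
    exact this.integrable one_le_two
  -- integrability of the cross inner product
  have hcross : Integrable (fun θ => (inner ℝ (θ - θstar) (θstar - m) : ℝ)) ρ := by
    refine Integrable.mono' (hnorm.mul_const ‖θstar - m‖)
      (((continuous_id.sub continuous_const).inner continuous_const).aestronglyMeasurable)
      (Filter.Eventually.of_forall fun θ => ?_)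
    calc ‖(inner ℝ (θ - θstar) (θstar - m) : ℝ)‖ ≤ ‖θ - θstar‖ * ‖θstar - m‖ :=
      norm_inner_le_norm _ _
    _ = _ := rfl
  have hS_nonneg0 : 0 ≤ ∫ θ, ‖θ - θstar‖ ^ 2 ∂ρ :=
    integral_nonneg fun θ => sq_nonneg _
  have hV_nonneg : 0 ≤ V := by rw [hV]; linarith
  set S : ℝ := ∫ θ, ‖θ - θstar‖ ^ 2 ∂ρ with hS
  set J : ℝ := ∫ θ, (inner ℝ (θ - θstar) (θstar - m) : ℝ) ∂ρ with hJ
  have hS_nonneg : 0 ≤ S := hS_nonneg0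
  -- expansion of the first integral
  have hadd1 : Integrable
      (fun θ => ‖θ - θstar‖ ^ 2 + (inner ℝ (θ - θstar) (θstar - m) : ℝ)) ρ :=
    (hsq θstar).add hcross
  have hI1 : (∫ θ, (inner ℝ (θ - θstar) (θ - m) : ℝ) ∂ρ) = S + J := by
    rw [hS, hJ, ← integral_add (hsq θstar) hcross]
    refine integral_congr_ae (Filter.Eventually.of_forall fun θ => ?_)
    show (inner ℝ (θ - θstar) (θ - m) : ℝ)
      = ‖θ - θstar‖ ^ 2 + (inner ℝ (θ - θstar) (θstar - m) : ℝ)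
    have hθm : θ - m = (θ - θstar) + (θstar - m) := by abel
    rw [hθm, inner_add_right, real_inner_self_eq_norm_sq]
  -- expansion of the second integral
  have hI2 : (∫ θ, ‖θ - m‖ ^ 2 ∂ρ) = S + 2 * J + M ^ 2 := by
    have : (∫ θ, ‖θ - m‖ ^ 2 ∂ρ)
        = ∫ θ, (‖θ - θstar‖ ^ 2 + 2 * (inner ℝ (θ - θstar) (θstar - m) : ℝ)
            + ‖m - θstar‖ ^ 2) ∂ρ := by
      refine integral_congr_ae (Filter.Eventually.of_forall fun θ => ?_)
      show ‖θ - m‖ ^ 2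
        = ‖θ - θstar‖ ^ 2 + 2 * (inner ℝ (θ - θstar) (θstar - m) : ℝ) + ‖m - θstar‖ ^ 2
      have hθm : θ - m = (θ - θstar) + (θstar - m) := by abel
      rw [hθm, norm_add_sq_real, norm_sub_rev θstar m]
    have hadd2 : Integrable
        (fun θ => ‖θ - θstar‖ ^ 2 + 2 * (inner ℝ (θ - θstar) (θstar - m) : ℝ)) ρ :=
      (hsq θstar).add (hcross.const_mul 2)
    rw [this, integral_add hadd2 (integrable_const _),
      integral_add (hsq θstar) (hcross.const_mul 2), integral_const_mul, integral_const]
    simp [hM, hS, hJ]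
  -- Cauchy–Schwarz bound on J
  have hM0 : 0 ≤ M := hM ▸ norm_nonneg _
  have hJ_bound : |J| ≤ Real.sqrt S * M := by
    have h0 : |J| ≤ ∫ θ, |(inner ℝ (θ - θstar) (θstar - m) : ℝ)| ∂ρ := by
      rw [hJ, ← Real.norm_eq_abs]
      refine (norm_integral_le_integral_norm _).trans_eq ?_
      simp [Real.norm_eq_abs]
    have h1 : (∫ θ, |(inner ℝ (θ - θstar) (θstar - m) : ℝ)| ∂ρ)
        ≤ ∫ θ, ‖θ - θstar‖ * ‖θstar - m‖ ∂ρ :=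
      integral_mono hcross.abs (hnorm.mul_const _)
        fun θ => abs_real_inner_le_norm _ _
    have h2 : (∫ θ, ‖θ - θstar‖ * ‖θstar - m‖ ∂ρ)
        = (∫ θ, ‖θ - θstar‖ ∂ρ) * ‖θstar - m‖ := integral_mul_const _ _
    have h3 : (∫ θ, ‖θ - θstar‖ ∂ρ) ≤ Real.sqrt S :=
      my_l1_le_sqrt_l2 ρ (fun θ => norm_nonneg _)
        (continuous_id.sub continuous_const).norm.aestronglyMeasurable (hsq θstar)
    have hMeq : ‖θstar - m‖ = M := by rw [hM, norm_sub_rev]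
    calc |J| ≤ (∫ θ, ‖θ - θstar‖ ∂ρ) * M := by
          rw [← hMeq, ← h2]; exact h0.trans h1
    _ ≤ Real.sqrt S * M := mul_le_mul_of_nonneg_right h3 hM0
  have hS2V : S = 2 * V := by rw [hV]; ring
  have hsqrtS : Real.sqrt S = Real.sqrt 2 * Real.sqrt V := by
    rw [hS2V, Real.sqrt_mul (by norm_num)]
  have hE' : E = -a * V + (d * σ ^ 2 - lam) * J + cd * M ^ 2 := by
    rw [hE, hI1, hI2, hS2V, ha, hcd]; ring
  have hsqV : 0 ≤ Real.sqrt V := Real.sqrt_nonneg _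
  have hd0 : (0:ℝ) ≤ d * σ ^ 2 := by positivity
  have habs_coef : |d * σ ^ 2 - lam| ≤ lam + d * σ ^ 2 := by
    rw [abs_le]; constructor <;> linarith
  have hfull : |(d * σ ^ 2 - lam) * J| ≤ b * Real.sqrt V * M := by
    rw [abs_mul]
    calc |d * σ ^ 2 - lam| * |J| ≤ (lam + d * σ ^ 2) * (Real.sqrt S * M) :=
        mul_le_mul habs_coef hJ_bound (abs_nonneg _) (by positivity)
    _ = b * Real.sqrt V * M := by rw [hb, hsqrtS]; ring
  have hcdM : 0 ≤ cd * M ^ 2 := by rw [hcd]; positivity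
  obtain ⟨hl, hr⟩ := abs_le.1 hfull
  exact ⟨by linarith, by linarith⟩
end
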